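/- arXiv:2512.09526 — 4 statements merged into one kernel-verified Lean document; each statement's English description precedes it below -/
import Mathlib

section
/- Let Λ, Λ₁, Λ₂ be three A-lattices in ℂ∞ of the same rank r ≥ 1 such that Λ ⊆ Λ₁ ∩ Λ₂. Then Λ₁ ∩ Λ₂ and Λ₁ + Λ₂ are also A-lattices of rank r, and the covolumes satisfy 𝒟(Λ₁ ∩ Λ₂) · 𝒟(Λ₁ + Λ₂) = 𝒟(Λ₁) · 𝒟(Λ₂) (equivalently, log_q 𝒟(Λ₁∩Λ₂) + log_q 𝒟(Λ₁+Λ₂) = log_q 𝒟(Λ₁) + log_q 𝒟(Λ₂)). -/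
open Polynomial

/-- An `A`-lattice (`A = Fq[T]`) in `ℂ∞`: a finitely generated `A`-submodule which is
discrete, i.e. meets every bounded ball in a finite set. -/
def IsALattice (Fq : Type*) [Field Fq] {Cinf : Type*} [Field Cinf]
    [Algebra (Polynomial Fq) Cinf] (abv : AbsoluteValue Cinf ℝ)
    (Λ : Submodule (Polynomial Fq) Cinf) : Prop :=
  Λ.FG ∧ ∀ r : ℝ, {x : Cinf | x ∈ Λ ∧ abv x ≤ r}.Finite

/-- A successive minimum basis of a lattice `Λ`: an `A`-basis `η₁, …, η_r` with
`|η₁| ≥ … ≥ |η_r|` such that each `η_k` has minimal absolute value among the nonzero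
elements of `Λ` modulo `A·η_{k+1} + … + A·η_r`. -/
def IsSuccMinBasis (Fq : Type*) [Field Fq] {Cinf : Type*} [Field Cinf]
    [Algebra (Polynomial Fq) Cinf] (abv : AbsoluteValue Cinf ℝ)
    (Λ : Submodule (Polynomial Fq) Cinf) {r : ℕ} (η : Fin r → Cinf) : Prop :=
  (∀ k, η k ∈ Λ) ∧ LinearIndependent (Polynomial Fq) η ∧
    (∀ x ∈ Λ, x ∈ Submodule.span (Polynomial Fq) (Set.range η)) ∧
    (∀ j k : Fin r, j ≤ k → abv (η k) ≤ abv (η j)) ∧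
    (∀ k : Fin r, ∀ x ∈ Λ, ∀ a : Fin r → Polynomial Fq,
      x - ∑ i ∈ Finset.univ.filter (fun i => k < i), a i • η i ≠ 0 →
      abv (η k) ≤ abv (x - ∑ i ∈ Finset.univ.filter (fun i => k < i), a i • η i))

section Aux

variable {Fq Cinf : Type*} [Field Fq] [Fintype Fq] [Field Cinf]
    [Algebra (Polynomial Fq) Cinf]
    {abv : AbsoluteValue Cinf ℝ}

lemma one_lt_q : (1 : ℝ) < (Fintype.card Fq : ℝ) := by
  exact_mod_cast Fintype.one_lt_card

lemma abv_sum_le (hna : ∀ x y : Cinf, abv (x + y) ≤ max (abv x) (abv y))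
    {ι : Type*} (s : Finset ι) (f : ι → Cinf) {C : ℝ} (hC : 0 ≤ C)
    (h : ∀ i ∈ s, abv (f i) ≤ C) : abv (∑ i ∈ s, f i) ≤ C := by
  classical
  induction s using Finset.induction with
  | empty => simpa using hC
  | @insert a s ha ih =>
      rw [Finset.sum_insert ha]
      exact (hna _ _).trans (max_le (h _ (Finset.mem_insert_self _ _))
        (ih fun i hi => h i (Finset.mem_insert_of_mem hi)))

lemma abv_sum_lt (hna : ∀ x y : Cinf, abv (x + y) ≤ max (abv x) (abv y))
    {ι : Type*} (s : Finset ι) (f : ι → Cinf) {C : ℝ} (hC : 0 < C)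
    (h : ∀ i ∈ s, abv (f i) < C) : abv (∑ i ∈ s, f i) < C := by
  classical
  induction s using Finset.induction with
  | empty => simpa using hC
  | @insert a s ha ih =>
      rw [Finset.sum_insert ha]
      exact lt_of_le_of_lt (hna _ _) (max_lt (h _ (Finset.mem_insert_self _ _))
        (ih fun i hi => h i (Finset.mem_insert_of_mem hi)))

variable (habv : ∀ a : Polynomial Fq, a ≠ 0 →
      abv (algebraMap (Polynomial Fq) Cinf a) = (Fintype.card Fq : ℝ) ^ a.natDegree)

include habv

lemma algebraMap_ne_zero {a : Polynomial Fq} (ha : a ≠ 0) :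
    algebraMap (Polynomial Fq) Cinf a ≠ 0 := by
  intro h
  have := habv a ha
  rw [h, map_zero] at this
  have : (0:ℝ) < (0:ℝ) := by
    calc (0:ℝ) < (Fintype.card Fq : ℝ) ^ a.natDegree := by positivity
    _ = 0 := this.symm
  exact lt_irrefl _ this

lemma abv_smul_eq {a : Polynomial Fq} (ha : a ≠ 0) (x : Cinf) :
    abv (a • x) = (Fintype.card Fq : ℝ) ^ a.natDegree * abv x := by
  rw [Algebra.smul_def, map_mul, habv a ha]

lemma exists_linIndep (N : Submodule (Polynomial Fq) Cinf) (hN : N.FG) :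
    ∃ f : Fin (Module.finrank (Polynomial Fq) N) → Cinf,
      LinearIndependent (Polynomial Fq) f ∧ ∀ i, f i ∈ N := by
  haveI : Module.Finite (Polynomial Fq) N := Module.Finite.iff_fg.2 hN
  haveI : NoZeroSMulDivisors (Polynomial Fq) N := by
    constructor
    intro a x h
    have h' : a • (x : Cinf) = 0 := by
      have := congrArg Subtype.val h
      simpa using this
    rw [Algebra.smul_def, mul_eq_zero] at h'
    rcases h' with h1 | h2
    · exact Or.inl (by by_contra ha; exact algebraMap_ne_zero habv ha h1)
    · exact Or.inr (by ext; simpa using h2)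
  haveI : Module.Free (Polynomial Fq) N := Module.free_of_finite_type_torsion_free'
  let b := Module.Free.chooseBasis (Polynomial Fq) N
  let e : Module.Free.ChooseBasisIndex (Polynomial Fq) N ≃
      Fin (Module.finrank (Polynomial Fq) N) :=
    Fintype.equivFinOfCardEq (Module.finrank_eq_card_chooseBasisIndex _ _).symm
  refine ⟨fun i => (b (e.symm i) : Cinf), ?_, fun i => (b (e.symm i)).2⟩
  have h1 : LinearIndependent (Polynomial Fq) (fun i => b (e.symm i)) :=
    b.linearIndependent.comp _ e.symm.injective
  exact h1.map' N.subtype (Submodule.ker_subtype N)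

omit habv in
lemma card_le_finrank (N : Submodule (Polynomial Fq) Cinf) (hN : N.FG) {ι : Type*} [Fintype ι]
    {f : ι → Cinf} (hf : LinearIndependent (Polynomial Fq) f) (hmem : ∀ i, f i ∈ N) :
    Fintype.card ι ≤ Module.finrank (Polynomial Fq) N := by
  haveI : Module.Finite (Polynomial Fq) N := Module.Finite.iff_fg.2 hN
  have hF : LinearIndependent (Polynomial Fq) (fun i => (⟨f i, hmem i⟩ : N)) :=
    LinearIndependent.of_comp N.subtype (by exact hf)
  exact hF.fintype_card_le_finrank

lemma exists_smul_mem (M N : Submodule (Polynomial Fq) Cinf) (hMN : M ≤ N)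
    (hM : M.FG) (hN : N.FG)
    (hrk : Module.finrank (Polynomial Fq) M = Module.finrank (Polynomial Fq) N) :
    ∃ d : Polynomial Fq, d.Monic ∧ ∀ x ∈ N, d • x ∈ M := by
  classical
  have key : ∀ g ∈ N, ∃ d : Polynomial Fq, d ≠ 0 ∧ d • g ∈ M := by
    intro g hg
    by_contra hcon
    push_neg at hcon
    obtain ⟨f, hfi, hfm⟩ := exists_linIndep habv M hM
    have hind : LinearIndependent (Polynomial Fq)
        (fun o : Option (Fin (Module.finrank (Polynomial Fq) M)) => Option.elim o g f) := by
      rw [Fintype.linearIndependent_iff]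
      intro c hc
      rw [Fintype.sum_option] at hc
      simp only [Option.elim_none, Option.elim_some] at hc
      have hcnone : c none = 0 := by
        by_contra h0
        have hmem : c none • g ∈ M := by
          have heq : c none • g = -∑ i, c (some i) • f i :=
            eq_neg_of_add_eq_zero_left hc
          rw [heq]
          exact Submodule.neg_mem _ (Submodule.sum_mem _ fun i _ =>
            Submodule.smul_mem _ _ (hfm i))
        exact hcon (c none) h0 hmem
      have hsum : ∑ i, c (some i) • f i = 0 := by
        simpa [hcnone] using hc
      have := Fintype.linearIndependent_iff.1 hfi (fun i => c (some i)) hsum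
      intro o
      cases o with
      | none => exact hcnone
      | some i => exact this i
    have hle : Fintype.card (Option (Fin (Module.finrank (Polynomial Fq) M))) ≤ Module.finrank (Polynomial Fq) N :=
      card_le_finrank N hN hind (by
        rintro (_ | i)
        · exact hg
        · exact hMN (hfm i))
    rw [Fintype.card_option, Fintype.card_fin, ← hrk] at hle
    omega
  obtain ⟨S, hS⟩ := hN
  have hSN : ∀ g ∈ S, (g : Cinf) ∈ N := fun g hg => hS ▸ Submodule.subset_span hg
  choose dd hdd0 hddm using fun g : S => key g (hSN g g.2)
  set d0 : Polynomial Fq := ∏ g : S, dd g with hd0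
  have hd0ne : d0 ≠ 0 := Finset.prod_ne_zero_iff.2 fun g _ => hdd0 g
  have hmain : ∀ x ∈ N, d0 • x ∈ M := by
    have hle : N ≤ Submodule.comap (LinearMap.lsmul (Polynomial Fq) Cinf d0) M := by
      rw [← hS, Submodule.span_le]
      intro g hg
      simp only [Set.mem_setOf_eq, SetLike.mem_coe, Submodule.mem_comap,
        LinearMap.lsmul_apply]
      have heq : d0 = dd ⟨g, hg⟩ * ∏ h ∈ Finset.univ.erase ⟨g, hg⟩, dd h :=
        (Finset.mul_prod_erase _ _ (Finset.mem_univ _)).symm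
      rw [heq, mul_comm, mul_smul]
      exact Submodule.smul_mem _ _ (hddm ⟨g, hg⟩)
    intro x hx
    exact hle hx
  refine ⟨d0 * Polynomial.C d0.leadingCoeff⁻¹, monic_mul_leadingCoeff_inv hd0ne, ?_⟩
  intro x hx
  rw [mul_comm, mul_smul]
  exact Submodule.smul_mem _ _ (hmain x hx)

lemma exists_decomp (hna : ∀ x y : Cinf, abv (x + y) ≤ max (abv x) (abv y))
    (Λ₁ Λ₂ : Submodule (Polynomial Fq) Cinf) (hN : Λ₂.FG)
    {d : Polynomial Fq} (hd : d.Monic) (hdm : ∀ x ∈ Λ₂, d • x ∈ Λ₁) :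
    ∃ C : ℝ, 0 ≤ C ∧ ∀ s ∈ Λ₁ ⊔ Λ₂, ∃ x y : Cinf, x ∈ Λ₁ ∧ y ∈ Λ₂ ∧ x + y = s ∧
      abv y ≤ C ∧ abv x ≤ max (abv s) C := by
  classical
  obtain ⟨S, hS⟩ := hN
  refine ⟨(Fintype.card Fq : ℝ) ^ d.natDegree * ∑ g ∈ S, abv g, by positivity, ?_⟩
  intro s hs
  rw [Submodule.mem_sup] at hs
  obtain ⟨u, hu, v, hv, huv⟩ := hs
  rw [← hS, Submodule.mem_span_finset] at hv
  obtain ⟨c, -, hc⟩ := hv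
  set y := ∑ g ∈ S, (c g %ₘ d) • g with hy
  have hmemS : ∀ g ∈ S, g ∈ Λ₂ := fun g hg => hS ▸ Submodule.subset_span hg
  have hymem : y ∈ Λ₂ :=
    Submodule.sum_mem _ fun g hg => Submodule.smul_mem _ _ (hmemS g hg)
  have hyabv : abv y ≤ (Fintype.card Fq : ℝ) ^ d.natDegree * ∑ g ∈ S, abv g := by
    refine abv_sum_le hna _ _ (by positivity) ?_
    intro g hg
    by_cases h0 : c g %ₘ d = 0
    · simp only [h0, zero_smul, map_zero]
      positivity
    · rw [abv_smul_eq habv h0]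
      have h1 : (c g %ₘ d).natDegree ≤ d.natDegree :=
        le_of_lt (Polynomial.natDegree_lt_natDegree h0 (Polynomial.degree_modByMonic_lt _ hd))
      have h2 : abv g ≤ ∑ g' ∈ S, abv g' :=
        Finset.single_le_sum (f := fun g' => abv g') (fun i _ => abv.nonneg i) hg
      have hq1 : (1:ℝ) ≤ (Fintype.card Fq : ℝ) := le_of_lt one_lt_q
      exact mul_le_mul (pow_le_pow_right₀ hq1 h1) h2 (abv.nonneg _) (by positivity)
  have hvy : v - y ∈ Λ₁ := by
    have heq : v - y = d • ∑ g ∈ S, (c g /ₘ d) • g := by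
      rw [Finset.smul_sum, ← hc, hy, ← Finset.sum_sub_distrib]
      refine Finset.sum_congr rfl fun g _ => ?_
      rw [smul_smul, ← sub_smul]
      congr 1
      have := Polynomial.modByMonic_add_div (c g) d
      linear_combination -this
    rw [heq]
    exact hdm _ (Submodule.sum_mem _ fun g hg => Submodule.smul_mem _ _ (hmemS g hg))
  refine ⟨s - y, y, ?_, hymem, by ring, hyabv, ?_⟩
  · have heq : s - y = u + (v - y) := by rw [← huv]; ring
    rw [heq]
    exact Submodule.add_mem _ hu hvy
  · have h1 : abv (s - y) ≤ max (abv s) (abv y) := by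
      have : s - y = s + (-y) := by ring
      rw [this]
      refine (hna _ _).trans ?_
      rw [abv.map_neg]
    exact h1.trans (max_le_max le_rfl hyabv)


section SMB

variable {L : Submodule (Polynomial Fq) Cinf} {r : ℕ} {η : Fin r → Cinf}

omit habv in
lemma smb_min (hb : IsSuccMinBasis Fq abv L η) (hr : 1 ≤ r) :
    ∀ x ∈ L, x ≠ 0 → abv (η ⟨0, hr⟩) ≤ abv x := by
  intro x hx hx0
  have h := hb.2.2.2.2 ⟨0, hr⟩ x hx (fun _ => 0)
  simp only [zero_smul, Finset.sum_const_zero, sub_zero] at h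
  exact h hx0

omit habv in
lemma smb_eq (hb : IsSuccMinBasis Fq abv L η) (hr : 1 ≤ r) (k : Fin r) :
    abv (η k) = abv (η ⟨0, hr⟩) :=
  le_antisymm (hb.2.2.2.1 ⟨0, hr⟩ k (by simp [Fin.le_def]))
    (smb_min hb hr _ (hb.1 k) (hb.2.1.ne_zero k))

omit habv in
lemma smb_pos (hb : IsSuccMinBasis Fq abv L η) (hr : 1 ≤ r) :
    0 < abv (η ⟨0, hr⟩) :=
  abv.pos (hb.2.1.ne_zero _)

lemma smb_orth (hna : ∀ x y : Cinf, abv (x + y) ≤ max (abv x) (abv y))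
    (hb : IsSuccMinBasis Fq abv L η) (hr : 1 ≤ r)
    {a : Fin r → Polynomial Fq} {k : Fin r} (hk : a k ≠ 0) :
    (Fintype.card Fq : ℝ) ^ (a k).natDegree * abv (η ⟨0, hr⟩) ≤ abv (∑ i, a i • η i) := by
  classical
  have hm0 : 0 < abv (η ⟨0, hr⟩) := smb_pos hb hr
  set m := abv (η ⟨0, hr⟩) with hm
  set T : Finset (Fin r) := Finset.univ.filter (fun i => a i ≠ 0) with hT
  have hkT : k ∈ T := by simp [hT, hk]
  set D := T.sup (fun i => (a i).natDegree) with hD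
  have hkD : (a k).natDegree ≤ D := Finset.le_sup (f := fun i => (a i).natDegree) hkT
  have hq1 : (1:ℝ) < (Fintype.card Fq : ℝ) := one_lt_q
  suffices h : (Fintype.card Fq : ℝ) ^ D * m ≤ abv (∑ i, a i • η i) by
    exact le_trans (mul_le_mul_of_nonneg_right (pow_le_pow_right₀ hq1.le hkD) hm0.le) h
  by_contra hcon
  push_neg at hcon
  obtain ⟨i₀, hi₀T, hi₀⟩ := Finset.exists_mem_eq_sup T ⟨k, hkT⟩ (fun i => (a i).natDegree)
  set S : Finset (Fin r) := Finset.univ.filter (fun i => a i ≠ 0 ∧ (a i).natDegree = D) with hS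
  have hi₀S : i₀ ∈ S := by
    simp only [hS, Finset.mem_filter, Finset.mem_univ, true_and]
    exact ⟨(Finset.mem_filter.1 hi₀T).2, hi₀.symm⟩
  set v := ∑ i ∈ S, (Polynomial.C ((a i).leadingCoeff)) • η i with hv
  have hvL : v ∈ L := Submodule.sum_mem _ fun i _ => Submodule.smul_mem _ _ (hb.1 i)
  have hvsum : ∑ i, (if i ∈ S then Polynomial.C ((a i).leadingCoeff) else 0) • η i = v := by
    simp only [ite_smul, zero_smul, Finset.sum_ite_mem, Finset.univ_inter, hv]
  have hvne : v ≠ 0 := by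
    intro h0
    have hz := Fintype.linearIndependent_iff.1 hb.2.1
      (fun i => if i ∈ S then Polynomial.C ((a i).leadingCoeff) else 0)
      (by rw [hvsum]; exact h0) i₀
    rw [if_pos hi₀S] at hz
    exact (Finset.mem_filter.1 hi₀S).2.1
      (Polynomial.leadingCoeff_eq_zero.1 (by simpa using hz))
  have hvm : m ≤ abv v := smb_min hb hr v hvL hvne
  set w := (Polynomial.X ^ D : Polynomial Fq) • v with hw
  have hwge : (Fintype.card Fq : ℝ) ^ D * m ≤ abv w := by
    rw [hw, abv_smul_eq habv (pow_ne_zero _ Polynomial.X_ne_zero)]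
    simp only [Polynomial.natDegree_X_pow]
    exact mul_le_mul_of_nonneg_left hvm (by positivity)
  have hsub : abv ((∑ i, a i • η i) - w) < (Fintype.card Fq : ℝ) ^ D * m := by
    have heq : (∑ i, a i • η i) - w =
        ∑ i, (a i - (if i ∈ S then
          Polynomial.C ((a i).leadingCoeff) * Polynomial.X ^ D else 0)) • η i := by
      rw [hw, ← hvsum, Finset.smul_sum, ← Finset.sum_sub_distrib]
      refine Finset.sum_congr rfl fun i _ => ?_
      rw [smul_smul, ← sub_smul]
      congr 2
      by_cases hiS : i ∈ S
      · simp [hiS, mul_comm]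
      · simp [hiS]
    rw [heq]
    refine abv_sum_lt hna _ _ (by positivity) ?_
    intro i _
    by_cases hiS : i ∈ S
    · rw [if_pos hiS]
      have hmem : a i ≠ 0 ∧ (a i).natDegree = D := by
        simpa [hS] using hiS
      have herase : a i - Polynomial.C ((a i).leadingCoeff) * Polynomial.X ^ D =
          (a i).eraseLead := by
        rw [← hmem.2]; exact Polynomial.self_sub_C_mul_X_pow (a i)
      rw [herase]
      by_cases h0 : (a i).eraseLead = 0
      · simp only [h0, zero_smul, map_zero]; positivity
      · rw [abv_smul_eq habv h0, smb_eq hb hr i]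
        have hlt : ((a i).eraseLead).natDegree < D := by
          rw [← hmem.2]
          exact Polynomial.natDegree_lt_natDegree h0 (Polynomial.degree_eraseLead_lt hmem.1)
        exact mul_lt_mul_of_pos_right (pow_lt_pow_right₀ hq1 hlt) hm0
    · rw [if_neg hiS, sub_zero]
      by_cases h0 : a i = 0
      · simp only [h0, zero_smul, map_zero]; positivity
      · rw [abv_smul_eq habv h0, smb_eq hb hr i]
        have hiT : i ∈ T := by simp [hT, h0]
        have hle : (a i).natDegree ≤ D := Finset.le_sup (f := fun i => (a i).natDegree) hiT
        have hne : (a i).natDegree ≠ D := fun hEq => hiS (by simp [hS, h0, hEq])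
        exact mul_lt_mul_of_pos_right (pow_lt_pow_right₀ hq1 (lt_of_le_of_ne hle hne)) hm0
  have hfin : abv w < (Fintype.card Fq : ℝ) ^ D * m := by
    have h2 : abv (w - ∑ i, a i • η i) = abv ((∑ i, a i • η i) - w) := by
      rw [← abv.map_neg]; congr 1; ring
    calc abv w ≤ max (abv (w - ∑ i, a i • η i)) (abv (∑ i, a i • η i)) := by
          have h1 : w = (w - (∑ i, a i • η i)) + (∑ i, a i • η i) := by ring
          nth_rewrite 1 [h1]
          exact hna _ _
      _ < (Fintype.card Fq : ℝ) ^ D * m := max_lt (h2 ▸ hsub) hcon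
  exact absurd hwge (not_le.2 hfin)

lemma smb_val (hna : ∀ x y : Cinf, abv (x + y) ≤ max (abv x) (abv y))
    (hb : IsSuccMinBasis Fq abv L η) (hr : 1 ≤ r) :
    ∀ x ∈ L, x ≠ 0 → ∃ D : ℕ,
      abv x = (Fintype.card Fq : ℝ) ^ D * abv (η ⟨0, hr⟩) := by
  classical
  intro x hx hx0
  obtain ⟨c, hc⟩ := (Submodule.mem_span_range_iff_exists_fun (Polynomial Fq)).1 (hb.2.2.1 x hx)
  have hk : ∃ k, c k ≠ 0 := by
    by_contra h
    push_neg at h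
    apply hx0
    rw [← hc]
    simp [h]
  obtain ⟨k, hk⟩ := hk
  set T : Finset (Fin r) := Finset.univ.filter (fun i => c i ≠ 0) with hT
  have hkT : k ∈ T := by simp [hT, hk]
  obtain ⟨i₀, hi₀T, hi₀⟩ := Finset.exists_mem_eq_sup T ⟨k, hkT⟩ (fun i => (c i).natDegree)
  refine ⟨T.sup (fun i => (c i).natDegree), le_antisymm ?_ ?_⟩
  · rw [← hc]
    refine abv_sum_le hna _ _
      (mul_nonneg (by positivity) (abv.nonneg _)) ?_
    intro i _
    by_cases h0 : c i = 0
    · simp only [h0, zero_smul, map_zero]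
      exact mul_nonneg (by positivity) (abv.nonneg _)
    · rw [abv_smul_eq habv h0, smb_eq hb hr i]
      exact mul_le_mul_of_nonneg_right
        (pow_le_pow_right₀ one_lt_q.le (Finset.le_sup (f := fun i => (c i).natDegree) (by simp [hT, h0]))) (abv.nonneg _)
  · rw [← hc]
    have horth := smb_orth habv hna hb hr (a := c) (k := i₀) ((Finset.mem_filter.1 hi₀T).2)
    rw [← hi₀] at horth
    exact horth

lemma smb_card (hna : ∀ x y : Cinf, abv (x + y) ≤ max (abv x) (abv y))
    (hb : IsSuccMinBasis Fq abv L η) (hr : 1 ≤ r) (n : ℕ) :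
    Nat.card {x : Cinf // x ∈ L ∧ abv x ≤ abv (η ⟨0, hr⟩) * (Fintype.card Fq : ℝ) ^ n}
      = (Fintype.card Fq) ^ ((n + 1) * r) := by
  classical
  have hm0 : 0 < abv (η ⟨0, hr⟩) := smb_pos hb hr
  have hq1 : (1:ℝ) < (Fintype.card Fq : ℝ) := one_lt_q
  set φ : (Fin r → Polynomial.degreeLT Fq (n+1)) →
      {x : Cinf // x ∈ L ∧ abv x ≤ abv (η ⟨0, hr⟩) * (Fintype.card Fq : ℝ) ^ n} := fun c =>
    ⟨∑ i, (c i : Polynomial Fq) • η i,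
      Submodule.sum_mem _ fun i _ => Submodule.smul_mem _ _ (hb.1 i), by
      refine abv_sum_le hna _ _ (mul_nonneg hm0.le (by positivity)) ?_
      intro i _
      by_cases h0 : (c i : Polynomial Fq) = 0
      · simp only [h0, zero_smul, map_zero]
        exact mul_nonneg hm0.le (by positivity)
      · rw [abv_smul_eq habv h0, smb_eq hb hr i]
        have hdeg : ((c i : Polynomial Fq)).natDegree ≤ n := by
          have h1 := Polynomial.mem_degreeLT.1 (c i).2
          have h2 : ((c i : Polynomial Fq)).natDegree < n + 1 :=
            (Polynomial.natDegree_lt_iff_degree_lt h0).2 (by exact_mod_cast h1)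
          omega
        calc (Fintype.card Fq : ℝ) ^ ((c i : Polynomial Fq)).natDegree * abv (η ⟨0, hr⟩)
            ≤ (Fintype.card Fq : ℝ) ^ n * abv (η ⟨0, hr⟩) :=
              mul_le_mul_of_nonneg_right (pow_le_pow_right₀ hq1.le hdeg) (abv.nonneg _)
          _ = abv (η ⟨0, hr⟩) * (Fintype.card Fq : ℝ) ^ n := mul_comm _ _⟩ with hφ
  have hinj : Function.Injective φ := by
    intro a b hab
    have hsum : ∑ i, ((a i : Polynomial Fq) - b i) • η i = 0 := by
      have := congrArg Subtype.val hab
      simp only [hφ] at this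
      simp only [sub_smul, Finset.sum_sub_distrib]
      rw [this, sub_self]
    have hz := Fintype.linearIndependent_iff.1 hb.2.1 _ hsum
    funext i
    exact Subtype.ext (sub_eq_zero.1 (hz i))
  have hsurj : Function.Surjective φ := by
    rintro ⟨x, hxL, hxb⟩
    obtain ⟨c, hc⟩ := (Submodule.mem_span_range_iff_exists_fun (Polynomial Fq)).1 (hb.2.2.1 x hxL)
    have hmem : ∀ i, c i ∈ Polynomial.degreeLT Fq (n+1) := by
      intro i
      rw [Polynomial.mem_degreeLT]
      by_cases h0 : c i = 0
      · rw [h0, Polynomial.degree_zero]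
        exact bot_lt_iff_ne_bot.2 (by simp)
      · have horth := smb_orth habv hna hb hr (a := c) (k := i) h0
        rw [hc] at horth
        have hle : (Fintype.card Fq : ℝ) ^ (c i).natDegree * abv (η ⟨0, hr⟩)
            ≤ (Fintype.card Fq : ℝ) ^ n * abv (η ⟨0, hr⟩) :=
          (horth.trans hxb).trans_eq (mul_comm _ _)
        have hpow : (Fintype.card Fq : ℝ) ^ (c i).natDegree ≤ (Fintype.card Fq : ℝ) ^ n :=
          le_of_mul_le_mul_right hle hm0
        have hdeg : (c i).natDegree ≤ n := (pow_le_pow_iff_right₀ hq1).1 hpow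
        have : (c i).natDegree < n + 1 := by omega
        exact (Polynomial.natDegree_lt_iff_degree_lt h0).1 this
    refine ⟨fun i => ⟨c i, hmem i⟩, ?_⟩
    apply Subtype.ext
    simpa [hφ] using hc
  have hcard := Nat.card_congr (Equiv.ofBijective φ ⟨hinj, hsurj⟩)
  rw [← hcard]
  have h1 : Nat.card (Polynomial.degreeLT Fq (n+1)) = Fintype.card Fq ^ (n+1) := by
    rw [Nat.card_congr (Polynomial.degreeLTEquiv Fq (n+1)).toEquiv]
    rw [Nat.card_pi]
    simp [Nat.card_eq_fintype_card]
  rw [Nat.card_pi]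
  simp only [h1, Finset.prod_const, Finset.card_univ, Fintype.card_fin]
  rw [← pow_mul]

end SMB

end Aux

theorem stmt0 {Fq Cinf : Type*} [Field Fq] [Fintype Fq] [Field Cinf]
    [Algebra (Polynomial Fq) Cinf] [IsAlgClosed Cinf]
    (abv : AbsoluteValue Cinf ℝ)
    (hna : ∀ x y : Cinf, abv (x + y) ≤ max (abv x) (abv y))
    (habv : ∀ a : Polynomial Fq, a ≠ 0 →
      abv (algebraMap (Polynomial Fq) Cinf a) = (Fintype.card Fq : ℝ) ^ a.natDegree)
    (r : ℕ) (hr : 1 ≤ r)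
    (Λ Λ₁ Λ₂ : Submodule (Polynomial Fq) Cinf)
    (hΛ : IsALattice Fq abv Λ) (hΛ₁ : IsALattice Fq abv Λ₁) (hΛ₂ : IsALattice Fq abv Λ₂)
    (hrk : Module.finrank (Polynomial Fq) Λ = r)
    (hrk₁ : Module.finrank (Polynomial Fq) Λ₁ = r)
    (hrk₂ : Module.finrank (Polynomial Fq) Λ₂ = r)
    (hsub : Λ ≤ Λ₁ ⊓ Λ₂) :
    IsALattice Fq abv (Λ₁ ⊓ Λ₂) ∧ IsALattice Fq abv (Λ₁ ⊔ Λ₂) ∧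
    Module.finrank (Polynomial Fq) ↥(Λ₁ ⊓ Λ₂ : Submodule (Polynomial Fq) Cinf) = r ∧
    Module.finrank (Polynomial Fq) ↥(Λ₁ ⊔ Λ₂ : Submodule (Polynomial Fq) Cinf) = r ∧
    ∀ (η₁ η₂ ηinf ηsup : Fin r → Cinf),
      IsSuccMinBasis Fq abv Λ₁ η₁ → IsSuccMinBasis Fq abv Λ₂ η₂ →
      IsSuccMinBasis Fq abv (Λ₁ ⊓ Λ₂) ηinf → IsSuccMinBasis Fq abv (Λ₁ ⊔ Λ₂) ηsup →
      (∏ i, abv (ηinf i)) * (∏ i, abv (ηsup i)) =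
        (∏ i, abv (η₁ i)) * (∏ i, abv (η₂ i)) := by
  classical
  have hq1 : (1:ℝ) < (Fintype.card Fq : ℝ) := one_lt_q
  have hΛ₂sub : Λ ≤ Λ₂ := hsub.trans inf_le_right
  have hΛ₁sub : Λ ≤ Λ₁ := hsub.trans inf_le_left
  obtain ⟨d, hdmon, hdm⟩ :=
    exists_smul_mem habv Λ Λ₂ hΛ₂sub hΛ.1 hΛ₂.1 (hrk.trans hrk₂.symm)
  have hdΛ₁ : ∀ x ∈ Λ₂, d • x ∈ Λ₁ := fun x hx => hΛ₁sub (hdm x hx)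
  obtain ⟨C, hC0, hdec⟩ := exists_decomp habv hna Λ₁ Λ₂ hΛ₂.1 hdmon hdΛ₁
  -- Part 1
  have hinfFG : (Λ₁ ⊓ Λ₂).FG := by
    haveI : IsNoetherian (Polynomial Fq) Λ₁ := isNoetherian_of_fg_of_noetherian _ hΛ₁.1
    have h1 : (Submodule.comap Λ₁.subtype (Λ₁ ⊓ Λ₂)).FG := IsNoetherian.noetherian _
    have h2 := h1.map Λ₁.subtype
    rw [Submodule.map_comap_subtype] at h2
    have h3 : Λ₁ ⊓ (Λ₁ ⊓ Λ₂) = Λ₁ ⊓ Λ₂ := by rw [← inf_assoc, inf_idem]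
    rwa [h3] at h2
  have hinfdisc : ∀ ρ : ℝ, {x : Cinf | x ∈ Λ₁ ⊓ Λ₂ ∧ abv x ≤ ρ}.Finite := fun ρ =>
    (hΛ₁.2 ρ).subset (fun x hx => ⟨hx.1.1, hx.2⟩)
  -- Part 2
  have hsupFG : (Λ₁ ⊔ Λ₂).FG := hΛ₁.1.sup hΛ₂.1
  have hsupdisc : ∀ ρ : ℝ, {x : Cinf | x ∈ Λ₁ ⊔ Λ₂ ∧ abv x ≤ ρ}.Finite := by
    intro ρ
    have hfin : (Set.image2 (· + ·) {x : Cinf | x ∈ Λ₁ ∧ abv x ≤ max ρ C}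
        {y : Cinf | y ∈ Λ₂ ∧ abv y ≤ C}).Finite :=
      Set.Finite.image2 _ (hΛ₁.2 _) (hΛ₂.2 _)
    refine hfin.subset ?_
    rintro s ⟨hs, hsρ⟩
    obtain ⟨x, y, hx1, hy2, hxy, hyC, hxC⟩ := hdec s hs
    exact ⟨x, ⟨hx1, hxC.trans (max_le_max hsρ le_rfl)⟩, y, ⟨hy2, hyC⟩, hxy⟩
  -- Part 3
  have hrkinf : Module.finrank (Polynomial Fq)
      ↥(Λ₁ ⊓ Λ₂ : Submodule (Polynomial Fq) Cinf) = r := by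
    obtain ⟨f, hfi, hfm⟩ := exists_linIndep habv _ hinfFG
    obtain ⟨g, hgi, hgm⟩ := exists_linIndep habv _ hΛ.1
    have h1 := card_le_finrank Λ₁ hΛ₁.1 hfi (fun i => (hfm i).1)
    have h2 := card_le_finrank (Λ₁ ⊓ Λ₂) hinfFG hgi (fun i => hsub (hgm i))
    rw [Fintype.card_fin, hrk₁] at h1
    rw [Fintype.card_fin, hrk] at h2
    omega
  -- Part 4
  have hrksup : Module.finrank (Polynomial Fq)
      ↥(Λ₁ ⊔ Λ₂ : Submodule (Polynomial Fq) Cinf) = r := by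
    obtain ⟨f, hfi, hfm⟩ := exists_linIndep habv _ hsupFG
    obtain ⟨g, hgi, hgm⟩ := exists_linIndep habv _ hΛ₁.1
    have hdf : ∀ i, d • f i ∈ Λ₁ := by
      intro i
      have hm := hfm i
      rw [Submodule.mem_sup] at hm
      obtain ⟨u, hu, v, hv, huv⟩ := hm
      rw [← huv, smul_add]
      exact Submodule.add_mem _ (Submodule.smul_mem _ _ hu) (hdΛ₁ v hv)
    have hdfi : LinearIndependent (Polynomial Fq) (fun i => d • f i) := by
      rw [Fintype.linearIndependent_iff]
      intro cc hcc
      have hcc' : ∑ i, (cc i * d) • f i = 0 := by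
        simpa [mul_smul] using hcc
      have hz := Fintype.linearIndependent_iff.1 hfi _ hcc'
      intro i
      rcases mul_eq_zero.1 (hz i) with h | h
      · exact h
      · exact absurd h hdmon.ne_zero
    have h1 := card_le_finrank Λ₁ hΛ₁.1 hdfi hdf
    have h2 := card_le_finrank (Λ₁ ⊔ Λ₂) hsupFG hgi
      (fun i => Submodule.mem_sup_left (hgm i))
    rw [Fintype.card_fin, hrk₁] at h1
    rw [Fintype.card_fin, hrk₁] at h2
    omega
  refine ⟨⟨hinfFG, hinfdisc⟩, ⟨hsupFG, hsupdisc⟩, hrkinf, hrksup, ?_⟩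
  -- Part 5
  intro η₁ η₂ ηinf ηsup hb₁ hb₂ hbinf hbsup
  have hmsup0 : 0 < abv (ηsup ⟨0, hr⟩) := smb_pos hbsup hr
  obtain ⟨k1, hk1⟩ := smb_val habv hna hbsup hr (η₁ ⟨0, hr⟩)
    (Submodule.mem_sup_left (hb₁.1 _)) (hb₁.2.1.ne_zero _)
  obtain ⟨k2, hk2⟩ := smb_val habv hna hbsup hr (η₂ ⟨0, hr⟩)
    (Submodule.mem_sup_right (hb₂.1 _)) (hb₂.2.1.ne_zero _)
  obtain ⟨kinf, hkinf⟩ := smb_val habv hna hbsup hr (ηinf ⟨0, hr⟩)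
    (Submodule.mem_sup_left ((hbinf.1 _).1)) (hbinf.2.1.ne_zero _)
  obtain ⟨n₀, hn₀⟩ := pow_unbounded_of_one_lt (C / abv (ηsup ⟨0, hr⟩)) hq1
  set n := n₀ + k1 + k2 + kinf with hn
  have hCn : C ≤ abv (ηsup ⟨0, hr⟩) * (Fintype.card Fq : ℝ) ^ n := by
    have h1 : C < (Fintype.card Fq : ℝ) ^ n₀ * abv (ηsup ⟨0, hr⟩) :=
      (div_lt_iff₀ hmsup0).1 hn₀
    have h2 : (Fintype.card Fq : ℝ) ^ n₀ ≤ (Fintype.card Fq : ℝ) ^ n :=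
      pow_le_pow_right₀ hq1.le (by omega)
    nlinarith
  have hball : ∀ (L : Submodule (Polynomial Fq) Cinf) (ηL : Fin r → Cinf),
      IsSuccMinBasis Fq abv L ηL → ∀ k : ℕ, k ≤ n →
      abv (ηL ⟨0, hr⟩) = (Fintype.card Fq : ℝ) ^ k * abv (ηsup ⟨0, hr⟩) →
      Nat.card {x : Cinf // x ∈ L ∧
        abv x ≤ abv (ηsup ⟨0, hr⟩) * (Fintype.card Fq : ℝ) ^ n}
        = (Fintype.card Fq) ^ ((n - k + 1) * r) := by
    intro L ηL hbL k hkn hmL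
    have hRL : abv (ηsup ⟨0, hr⟩) * (Fintype.card Fq : ℝ) ^ n
        = abv (ηL ⟨0, hr⟩) * (Fintype.card Fq : ℝ) ^ (n - k) := by
      rw [hmL, mul_comm ((Fintype.card Fq : ℝ) ^ k), mul_assoc, ← pow_add]
      congr 2
      omega
    rw [hRL]
    exact smb_card habv hna hbL hr (n - k)
  -- double counting
  have hCR : C ≤ abv (ηsup ⟨0, hr⟩) * (Fintype.card Fq : ℝ) ^ n := hCn
  set R := abv (ηsup ⟨0, hr⟩) * (Fintype.card Fq : ℝ) ^ n with hR
  choose xd yd hxd1 hyd2 hxyd hydC hxdm using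
    fun s : {s : Cinf // s ∈ Λ₁ ⊔ Λ₂ ∧ abv s ≤ R} => hdec s s.2.1
  have hxdR : ∀ s, abv (xd s) ≤ R := fun s =>
    (hxdm s).trans (max_le s.2.2 hCR)
  have hydR : ∀ s, abv (yd s) ≤ R := fun s => (hydC s).trans hCR
  have hsubabv : ∀ x y : Cinf, abv (x - y) ≤ max (abv x) (abv y) := by
    intro x y
    have h : x - y = x + (-y) := by ring
    rw [h]
    exact (hna _ _).trans (by rw [abv.map_neg])
  have hdouble : Nat.card {x : Cinf // x ∈ Λ₁ ∧ abv x ≤ R} *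
      Nat.card {y : Cinf // y ∈ Λ₂ ∧ abv y ≤ R}
      = Nat.card {s : Cinf // s ∈ Λ₁ ⊔ Λ₂ ∧ abv s ≤ R} *
      Nat.card {z : Cinf // z ∈ Λ₁ ⊓ Λ₂ ∧ abv z ≤ R} := by
    rw [← Nat.card_prod, ← Nat.card_prod]
    apply Nat.card_congr
    have memS : ∀ p : {x : Cinf // x ∈ Λ₁ ∧ abv x ≤ R} ×
        {y : Cinf // y ∈ Λ₂ ∧ abv y ≤ R},
        (p.1 : Cinf) + (p.2 : Cinf) ∈ Λ₁ ⊔ Λ₂ ∧ abv ((p.1 : Cinf) + p.2) ≤ R :=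
      fun p => ⟨Submodule.add_mem _ (Submodule.mem_sup_left p.1.2.1)
          (Submodule.mem_sup_right p.2.2.1),
        (hna _ _).trans (max_le p.1.2.2 p.2.2.2)⟩
    have hxyd' : ∀ (t : Cinf) (ht : t ∈ Λ₁ ⊔ Λ₂ ∧ abv t ≤ R),
        xd ⟨t, ht⟩ + yd ⟨t, ht⟩ = t := fun t ht => hxyd ⟨t, ht⟩
    refine
      { toFun := fun p =>
          ⟨⟨(p.1 : Cinf) + p.2, memS p⟩,
            ⟨(p.1 : Cinf) - xd ⟨(p.1 : Cinf) + p.2, memS p⟩, ?_, ?_⟩⟩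
        invFun := fun p =>
          ⟨⟨xd p.1 + (p.2 : Cinf), ?_, ?_⟩, ⟨yd p.1 - (p.2 : Cinf), ?_, ?_⟩⟩
        left_inv := ?_
        right_inv := ?_ }
    · -- z ∈ Λ₁ ⊓ Λ₂  (for toFun)
      rename_i p
      have h := hxyd' ((p.1 : Cinf) + p.2) (memS p)
      refine Submodule.mem_inf.2 ⟨Submodule.sub_mem _ p.1.2.1 (hxd1 _), ?_⟩
      have heq : (p.1 : Cinf) - xd ⟨(p.1 : Cinf) + p.2, memS p⟩
          = yd ⟨(p.1 : Cinf) + p.2, memS p⟩ - (p.2 : Cinf) := by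
        linear_combination -h
      rw [heq]
      exact Submodule.sub_mem _ (hyd2 _) p.2.2.1
    · -- abv z ≤ R (for toFun)
      rename_i p
      exact (hsubabv _ _).trans (max_le p.1.2.2 (hxdR _))
    · rename_i p
      exact Submodule.add_mem _ (hxd1 _) (Submodule.mem_inf.1 p.2.2.1).1
    · rename_i p
      exact (hna _ _).trans (max_le (hxdR _) p.2.2.2)
    · rename_i p
      exact Submodule.sub_mem _ (hyd2 _) (Submodule.mem_inf.1 p.2.2.1).2
    · rename_i p
      exact (hsubabv _ _).trans (max_le (hydR _) p.2.2.2)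
    · -- left_inv
      rintro ⟨x, y⟩
      refine Prod.ext (Subtype.ext ?_) (Subtype.ext ?_)
      · show xd _ + ((x : Cinf) - xd _) = (x : Cinf)
        ring
      · show yd _ - ((x : Cinf) - xd _) = (y : Cinf)
        have h := hxyd' ((x : Cinf) + y) (memS (x, y))
        linear_combination h
    · -- right_inv
      rintro ⟨s, z⟩
      have h1 : (xd s + (z : Cinf)) + (yd s - (z : Cinf)) = (s : Cinf) := by
        have h := hxyd s
        linear_combination h
      refine Prod.ext (Subtype.ext ?_) (Subtype.ext ?_)
      · exact h1
      · have h2 : ∀ t : {t : Cinf // t ∈ Λ₁ ⊔ Λ₂ ∧ abv t ≤ R}, t = s →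
            (xd s + (z : Cinf)) - xd t = (z : Cinf) := by
          rintro t rfl
          ring
        exact h2 _ (Subtype.ext h1)
  -- evaluate cardinalities
  have e1 := hball Λ₁ η₁ hb₁ k1 (by omega) hk1
  have e2 := hball Λ₂ η₂ hb₂ k2 (by omega) hk2
  have einf := hball (Λ₁ ⊓ Λ₂) ηinf hbinf kinf (by omega) hkinf
  have esup := hball (Λ₁ ⊔ Λ₂) ηsup hbsup 0 (by omega) (by simp)
  rw [e1, e2, einf, esup] at hdouble
  rw [← pow_add, ← pow_add] at hdouble
  have hqc : 2 ≤ Fintype.card Fq := Fintype.one_lt_card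
  have hexp := Nat.pow_right_injective hqc hdouble
  have hk : kinf = k1 + k2 := by
    rw [← Nat.add_mul, ← Nat.add_mul] at hexp
    have := Nat.eq_of_mul_eq_mul_right (by omega : 0 < r) hexp
    omega
  have hp1 : ∏ i, abv (η₁ i) = (abv (η₁ ⟨0, hr⟩)) ^ r := by
    rw [Finset.prod_congr rfl (fun i _ => smb_eq hb₁ hr i), Finset.prod_const,
      Finset.card_univ, Fintype.card_fin]
  have hp2 : ∏ i, abv (η₂ i) = (abv (η₂ ⟨0, hr⟩)) ^ r := by
    rw [Finset.prod_congr rfl (fun i _ => smb_eq hb₂ hr i), Finset.prod_const,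
      Finset.card_univ, Fintype.card_fin]
  have hpinf : ∏ i, abv (ηinf i) = (abv (ηinf ⟨0, hr⟩)) ^ r := by
    rw [Finset.prod_congr rfl (fun i _ => smb_eq hbinf hr i), Finset.prod_const,
      Finset.card_univ, Fintype.card_fin]
  have hpsup : ∏ i, abv (ηsup i) = (abv (ηsup ⟨0, hr⟩)) ^ r := by
    rw [Finset.prod_congr rfl (fun i _ => smb_eq hbsup hr i), Finset.prod_const,
      Finset.card_univ, Fintype.card_fin]
  rw [hp1, hp2, hpinf, hpsup, hk1, hk2, hkinf, hk]
  ring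
end

section
/- Let F be a field containing 𝔽q, equipped with a non-archimedean additive valuation ν on F extended to an algebraic closure F̄ with values in ℚ ∪ {∞}. Let a ∈ F with ν(a) = 0, and let φ, ψ₁, ψ₂, ψ₃ ∈ F[X] be q-linearized polynomials of degree > 1, each having coefficient of X equal to a. Suppose f, g, ℓ ∈ F[X] are normalized q-linearized polynomials satisfying f ∘ φ = ψ₁ ∘ f, g ∘ φ = ψ₂ ∘ g, ℓ ∘ φ = ψ₃ ∘ ℓ, such that ker(f) ∩ ker(g) = {0} and ker(ℓ) = ker(f) + ker(g) (sum of 𝔽q-subspaces of F̄). For a q-linearized h = Σ h_i X^{q^i} of degree > 1 set λ_ν(h) = −min{ν(h_i)/(q^i − 1) : i ≥ 1, h_i ≠ 0}. Then λ_ν(φ) + λ_ν(ψ₃) ≤ λ_ν(ψ₁) + λ_ν(ψ₂). (This is the local parallelogram inequality for the graded height of Drinfeld modules in an isogeny parallelogram.) -/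
open Polynomial Pointwise

/-- A polynomial is `q`-linearized if it is of the form `Σ fᵢ X^(qⁱ)`. -/
def IsqLin {F : Type*} [Field F] (q : ℕ) (f : Polynomial F) : Prop :=
  ∀ n, f.coeff n ≠ 0 → ∃ i : ℕ, n = q ^ i

/-- The set of roots of `f` in an algebraic closure of `F`. -/
def kerSet {F : Type*} [Field F] (f : Polynomial F) : Set (AlgebraicClosure F) :=
  {β | Polynomial.aeval β f = 0}

/-- `λ_ν(h) = − min { ν(hᵢ)/(qⁱ − 1) : i ≥ 1, hᵢ ≠ 0 }`. -/
noncomputable def lamNu {F : Type*} [Field F] (q : ℕ) (ν : F → ℚ) (h : Polynomial F) : ℝ :=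
  - sInf {y : ℝ | ∃ i : ℕ, 1 ≤ i ∧ h.coeff (q ^ i) ≠ 0 ∧
      y = (ν (h.coeff (q ^ i)) : ℝ) / ((q : ℝ) ^ i - 1)}

noncomputable section

section Frob
variable {K : Type*} [Field K] (p : ℕ) [hp : Fact p.Prime] [CharP K p]

lemma coeff_pow_p (P : K[X]) (k : ℕ) :
    (P ^ p).coeff k = if p ∣ k then (P.coeff (k / p)) ^ p else 0 := by
  have h := Polynomial.map_frobenius_expand p P
  rw [← h, Polynomial.coeff_map, Polynomial.coeff_expand hp.out.pos]
  by_cases hd : p ∣ k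
  · simp [hd, frobenius_def]
  · simp [hd]

lemma coeff_pow_p_pow (E : ℕ) (P : K[X]) (k : ℕ) :
    (P ^ p ^ E).coeff k = if p ^ E ∣ k then (P.coeff (k / p ^ E)) ^ (p ^ E) else 0 := by
  induction E generalizing k with
  | zero => simp
  | succ e ih =>
      have hstep : P ^ p ^ (e + 1) = (P ^ p ^ e) ^ p := by
        rw [← pow_mul, pow_succ]
      rw [hstep, coeff_pow_p p]
      by_cases hd : p ∣ k
      · rw [if_pos hd, ih (k / p)]
        by_cases hd2 : p ^ e ∣ k / p
        · rw [if_pos hd2]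
          have hdvd : p ^ (e + 1) ∣ k := by
            obtain ⟨c, hc⟩ := hd
            obtain ⟨d, hdd⟩ := hd2
            have hkp : k / p = c := by
              rw [hc]; exact Nat.mul_div_cancel_left c hp.out.pos
            rw [hc, pow_succ]
            rw [hkp] at hdd
            exact ⟨d, by rw [hdd]; ring⟩
          rw [if_pos hdvd]
          rw [← pow_mul, ← pow_succ]
          congr 1
          rw [Nat.div_div_eq_div_mul, pow_succ']
        · rw [if_neg hd2]
          have hndvd : ¬ p ^ (e + 1) ∣ k := by
            intro hcon
            apply hd2
            obtain ⟨c, hc⟩ := hcon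
            have : k / p = p ^ e * c := by
              rw [hc, pow_succ]
              rw [show p ^ e * p * c = p * (p ^ e * c) by ring]
              exact Nat.mul_div_cancel_left _ hp.out.pos
            exact ⟨c, this⟩
          rw [if_neg hndvd, zero_pow hp.out.ne_zero]
      · rw [if_neg hd]
        have hndvd : ¬ p ^ (e + 1) ∣ k := by
          intro hcon
          exact hd (dvd_trans (dvd_pow_self p (Nat.succ_ne_zero e)) hcon)
        rw [if_neg hndvd]
end Frob

section GaussVal

variable {K : Type*} [Field K] (ν : K → ℚ)

open Classical in
/-- Gauss valuation of a polynomial at slope `t`. -/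
noncomputable def pgval (P : K[X]) (t : ℚ) : ℚ :=
  if h : P = 0 then 0
  else P.support.inf' (Polynomial.support_nonempty.mpr h) fun n => ν (P.coeff n) + n * t

variable (hm : ∀ x y : K, x ≠ 0 → y ≠ 0 → ν (x * y) = ν x + ν y)
variable (hadd : ∀ x y : K, x ≠ 0 → y ≠ 0 → x + y ≠ 0 → min (ν x) (ν y) ≤ ν (x + y))

include hm in
lemma pv_one : ν 1 = 0 := by
  have := hm 1 1 one_ne_zero one_ne_zero
  simp only [mul_one] at this
  linarith

include hm in
lemma pv_neg (x : K) (hx : x ≠ 0) : ν (-x) = ν x := by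
  have h1 : ν ((-1 : K) * (-1)) = ν (-1) + ν (-1) := hm _ _ (by norm_num) (by norm_num)
  simp only [neg_mul, one_mul, neg_neg] at h1
  rw [pv_one ν hm] at h1
  have hneg1 : ν (-1 : K) = 0 := by linarith
  calc ν (-x) = ν ((-1 : K) * x) := by ring_nf
    _ = ν (-1 : K) + ν x := hm _ _ (by norm_num) hx
    _ = ν x := by rw [hneg1]; ring

include hm in
lemma pv_pow (x : K) (hx : x ≠ 0) (n : ℕ) : ν (x ^ n) = n * ν x := by
  induction n with
  | zero => simpa using pv_one ν hm
  | succ k ih =>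
      rw [pow_succ, hm _ _ (pow_ne_zero _ hx) hx, ih]
      push_cast; ring

include hadd in
lemma pv_sum_le {ι : Type*} (s : Finset ι) (x : ι → K) (c : ℚ)
    (h : ∀ i ∈ s, x i ≠ 0 → c ≤ ν (x i)) (hs : (∑ i ∈ s, x i) ≠ 0) :
    c ≤ ν (∑ i ∈ s, x i) := by
  induction s using Finset.cons_induction with
  | empty => simp at hs
  | cons a s ha ih =>
      rw [Finset.sum_cons] at hs ⊢
      by_cases h1 : (∑ i ∈ s, x i) = 0
      · rw [h1, add_zero] at hs ⊢
        exact h a (Finset.mem_cons_self a s) hs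
      · by_cases h2 : x a = 0
        · rw [h2, zero_add] at hs ⊢
          exact ih (fun i hi => h i (Finset.mem_cons_of_mem hi)) h1
        · have hmin := hadd _ _ h2 h1 hs
          have hc1 : c ≤ ν (x a) := h a (Finset.mem_cons_self a s) h2
          have hc2 : c ≤ ν (∑ i ∈ s, x i) :=
            ih (fun i hi => h i (Finset.mem_cons_of_mem hi)) h1
          exact le_trans (le_min hc1 hc2) hmin

include hadd in
lemma pv_sum_lt {ι : Type*} (s : Finset ι) (x : ι → K) (c : ℚ)
    (h : ∀ i ∈ s, x i ≠ 0 → c < ν (x i)) (hs : (∑ i ∈ s, x i) ≠ 0) :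
    c < ν (∑ i ∈ s, x i) := by
  induction s using Finset.cons_induction with
  | empty => simp at hs
  | cons a s ha ih =>
      rw [Finset.sum_cons] at hs ⊢
      by_cases h1 : (∑ i ∈ s, x i) = 0
      · rw [h1, add_zero] at hs ⊢
        exact h a (Finset.mem_cons_self a s) hs
      · by_cases h2 : x a = 0
        · rw [h2, zero_add] at hs ⊢
          exact ih (fun i hi => h i (Finset.mem_cons_of_mem hi)) h1
        · have hmin := hadd _ _ h2 h1 hs
          have hc1 : c < ν (x a) := h a (Finset.mem_cons_self a s) h2
          have hc2 : c < ν (∑ i ∈ s, x i) :=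
            ih (fun i hi => h i (Finset.mem_cons_of_mem hi)) h1
          exact lt_of_lt_of_le (lt_min hc1 hc2) hmin

include hm hadd in
/-- If one term has strictly minimal valuation, the sum is nonzero with that valuation. -/
lemma pv_sum_eq {ι : Type*} [DecidableEq ι] (s : Finset ι) (x : ι → K) (a : ι) (has : a ∈ s)
    (hxa : x a ≠ 0) (h : ∀ i ∈ s, i ≠ a → x i ≠ 0 → ν (x a) < ν (x i)) :
    (∑ i ∈ s, x i) ≠ 0 ∧ ν (∑ i ∈ s, x i) = ν (x a) := by
  have hsplit : x a + ∑ i ∈ s.erase a, x i = ∑ i ∈ s, x i := Finset.add_sum_erase s x has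
  by_cases hR : (∑ i ∈ s.erase a, x i) = 0
  · rw [← hsplit, hR, add_zero]; exact ⟨hxa, rfl⟩
  · have hlt : ν (x a) < ν (∑ i ∈ s.erase a, x i) :=
      pv_sum_lt ν hadd _ _ _
        (fun i hi => h i (Finset.mem_of_mem_erase hi) (Finset.ne_of_mem_erase hi)) hR
    have hne : x a + ∑ i ∈ s.erase a, x i ≠ 0 := by
      intro hzero
      have : x a = -(∑ i ∈ s.erase a, x i) := by linear_combination (norm := ring_nf) hzero
      rw [this, pv_neg ν hm _ hR] at hlt
      exact lt_irrefl _ hlt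
    constructor
    · rwa [← hsplit]
    · rw [← hsplit]
      have hge := hadd _ _ hxa hR hne
      rw [min_eq_left (le_of_lt hlt)] at hge
      -- upper bound : x a = (x a + R) - R
      have hub : ν (x a) ≥ ν (x a + ∑ i ∈ s.erase a, x i) := by
        by_contra hcon
        push_neg at hcon
        have h2 : x a = (x a + ∑ i ∈ s.erase a, x i) + (-(∑ i ∈ s.erase a, x i)) := by ring
        have h3 := hadd _ _ hne (neg_ne_zero.mpr hR) (by rw [← h2]; exact hxa)
        rw [← h2, pv_neg ν hm _ hR] at h3
        have := le_min (le_of_lt hcon) (le_of_lt hlt)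
        have h4 := lt_of_lt_of_le (lt_min hcon hlt) h3
        exact lt_irrefl _ h4
      linarith

open Classical in
lemma pgval_le {P : K[X]} {n : ℕ} (hn : n ∈ P.support) (t : ℚ) :
    pgval ν P t ≤ ν (P.coeff n) + n * t := by
  have hP : P ≠ 0 := fun h => by simp [h] at hn
  rw [pgval, dif_neg hP]
  exact Finset.inf'_le _ hn

open Classical in
lemma pgval_exists {P : K[X]} (hP : P ≠ 0) (t : ℚ) :
    ∃ n ∈ P.support, pgval ν P t = ν (P.coeff n) + n * t := by
  rw [pgval, dif_neg hP]
  obtain ⟨n, hn, hv⟩ := Finset.exists_mem_eq_inf' (Polynomial.support_nonempty.mpr hP)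
    (fun n => ν (P.coeff n) + n * t)
  exact ⟨n, hn, hv⟩

open Classical in
lemma pgval_ge {P : K[X]} (hP : P ≠ 0) {t c : ℚ}
    (h : ∀ n ∈ P.support, c ≤ ν (P.coeff n) + n * t) : c ≤ pgval ν P t := by
  rw [pgval, dif_neg hP]
  exact Finset.le_inf' _ _ h

include hm hadd in
open Classical in
lemma pgval_mul {P Q : K[X]} (hP : P ≠ 0) (hQ : Q ≠ 0) (t : ℚ) :
    (P * Q ≠ 0) ∧ pgval ν (P * Q) t = pgval ν P t + pgval ν Q t := by
  classical
  -- maximal achievers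
  have hPA : (P.support.filter (fun n => ν (P.coeff n) + n * t = pgval ν P t)).Nonempty := by
    obtain ⟨n, hn, hv⟩ := pgval_exists ν hP t
    exact ⟨n, Finset.mem_filter.mpr ⟨hn, hv.symm⟩⟩
  have hQA : (Q.support.filter (fun n => ν (Q.coeff n) + n * t = pgval ν Q t)).Nonempty := by
    obtain ⟨n, hn, hv⟩ := pgval_exists ν hQ t
    exact ⟨n, Finset.mem_filter.mpr ⟨hn, hv.symm⟩⟩
  set iP := (P.support.filter (fun n => ν (P.coeff n) + n * t = pgval ν P t)).max' hPA with hiP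
  set iQ := (Q.support.filter (fun n => ν (Q.coeff n) + n * t = pgval ν Q t)).max' hQA with hiQ
  have hiPmem := Finset.max'_mem _ hPA
  have hiQmem := Finset.max'_mem _ hQA
  rw [Finset.mem_filter] at hiPmem hiQmem
  obtain ⟨hiPsupp, hiPach⟩ := hiPmem
  obtain ⟨hiQsupp, hiQach⟩ := hiQmem
  have hiPmax : ∀ n ∈ P.support, ν (P.coeff n) + n * t = pgval ν P t → n ≤ iP := by
    intro n hn hach
    exact Finset.le_max' _ n (Finset.mem_filter.mpr ⟨hn, hach⟩)
  have hiQmax : ∀ n ∈ Q.support, ν (Q.coeff n) + n * t = pgval ν Q t → n ≤ iQ := by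
    intro n hn hach
    exact Finset.le_max' _ n (Finset.mem_filter.mpr ⟨hn, hach⟩)
  -- strictly minimal term of the coefficient of P*Q at iP+iQ
  have hcoeff : (P * Q).coeff (iP + iQ)
      = ∑ x ∈ Finset.HasAntidiagonal.antidiagonal (iP + iQ), P.coeff x.1 * Q.coeff x.2 :=
    Polynomial.coeff_mul P Q (iP + iQ)
  have hmem : (iP, iQ) ∈ Finset.HasAntidiagonal.antidiagonal (iP + iQ) := by
    simp [Finset.HasAntidiagonal.mem_antidiagonal]
  have hPc : P.coeff iP ≠ 0 := Polynomial.mem_support_iff.mp hiPsupp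
  have hQc : Q.coeff iQ ≠ 0 := Polynomial.mem_support_iff.mp hiQsupp
  have hterm0 : P.coeff iP * Q.coeff iQ ≠ 0 := mul_ne_zero hPc hQc
  have hstrict : ∀ x ∈ Finset.HasAntidiagonal.antidiagonal (iP + iQ), x ≠ (iP, iQ) →
      P.coeff x.1 * Q.coeff x.2 ≠ 0 →
      ν (P.coeff iP * Q.coeff iQ) < ν (P.coeff x.1 * Q.coeff x.2) := by
    rintro ⟨i, j⟩ hij hne hterm
    have hsum : i + j = iP + iQ := Finset.HasAntidiagonal.mem_antidiagonal.mp hij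
    have hPi : P.coeff i ≠ 0 := left_ne_zero_of_mul hterm
    have hQj : Q.coeff j ≠ 0 := right_ne_zero_of_mul hterm
    have hisupp : i ∈ P.support := Polynomial.mem_support_iff.mpr hPi
    have hjsupp : j ∈ Q.support := Polynomial.mem_support_iff.mpr hQj
    have hgeP : pgval ν P t ≤ ν (P.coeff i) + i * t := pgval_le ν hisupp t
    have hgeQ : pgval ν Q t ≤ ν (Q.coeff j) + j * t := pgval_le ν hjsupp t
    rw [hm _ _ hPc hQc, hm _ _ hPi hQj]
    -- strictness: not both achieve with (i,j) = (iP,iQ) excluded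
    have hkey : pgval ν P t + pgval ν Q t < (ν (P.coeff i) + i * t) + (ν (Q.coeff j) + j * t) := by
      rcases lt_trichotomy i iP with hi | hi | hi
      · -- i < iP, so j > iQ, hence j does not achieve
        have hj : iQ < j := by omega
        have : ν (Q.coeff j) + j * t ≠ pgval ν Q t := by
          intro hach
          exact absurd (hiQmax j hjsupp hach) (by omega)
        have h2 : pgval ν Q t < ν (Q.coeff j) + j * t := lt_of_le_of_ne hgeQ (Ne.symm this)
        linarith
      · exfalso; apply hne; rw [Prod.ext_iff]; constructor <;> simp <;> omega
      · have : ν (P.coeff i) + i * t ≠ pgval ν P t := by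
          intro hach
          exact absurd (hiPmax i hisupp hach) (by omega)
        have h2 : pgval ν P t < ν (P.coeff i) + i * t := lt_of_le_of_ne hgeP (Ne.symm this)
        linarith
    have hij' : (i : ℚ) + (j : ℚ) = (iP : ℚ) + (iQ : ℚ) := by exact_mod_cast hsum
    have hij'' : (i : ℚ) * t + (j : ℚ) * t = (iP : ℚ) * t + (iQ : ℚ) * t := by
      linear_combination t * hij'
    linarith [hkey, hiPach, hiQach, hij'']
  obtain ⟨hne0, hval⟩ := pv_sum_eq ν hm hadd (Finset.HasAntidiagonal.antidiagonal (iP + iQ))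
    (fun x => P.coeff x.1 * Q.coeff x.2) (iP, iQ) hmem hterm0 hstrict
  have hPQcoeff : (P * Q).coeff (iP + iQ) ≠ 0 := by rw [hcoeff]; exact hne0
  have hPQ : P * Q ≠ 0 := fun h => by simp [h] at hPQcoeff
  refine ⟨hPQ, le_antisymm ?_ ?_⟩
  · -- pgval (P*Q) ≤ sum, via the witness coefficient
    have hsupp : (iP + iQ) ∈ (P * Q).support := Polynomial.mem_support_iff.mpr hPQcoeff
    have h1 := pgval_le ν hsupp t
    have hv2 : ν ((P * Q).coeff (iP + iQ)) = ν (P.coeff iP) + ν (Q.coeff iQ) := by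
      rw [hcoeff, hval, hm _ _ hPc hQc]
    rw [hv2] at h1
    have hcast : ((iP + iQ : ℕ) : ℚ) * t = (iP : ℚ) * t + (iQ : ℚ) * t := by push_cast; ring
    rw [hcast] at h1
    linarith [hiPach, hiQach, h1]
  · -- lower bound on each coefficient
    apply pgval_ge ν hPQ
    intro m hmsupp
    have hc : (P * Q).coeff m ≠ 0 := Polynomial.mem_support_iff.mp hmsupp
    rw [Polynomial.coeff_mul] at hc ⊢
    have hge : pgval ν P t + pgval ν Q t - m * t ≤
        ν (∑ x ∈ Finset.HasAntidiagonal.antidiagonal m, P.coeff x.1 * Q.coeff x.2) := by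
      apply pv_sum_le ν hadd _ _ _ _ hc
      rintro ⟨i, j⟩ hij hterm
      have hsum : i + j = m := Finset.HasAntidiagonal.mem_antidiagonal.mp hij
      have hPi : P.coeff i ≠ 0 := left_ne_zero_of_mul hterm
      have hQj : Q.coeff j ≠ 0 := right_ne_zero_of_mul hterm
      have hgeP := pgval_le ν (Polynomial.mem_support_iff.mpr hPi) t
      have hgeQ := pgval_le ν (Polynomial.mem_support_iff.mpr hQj) t
      rw [hm _ _ hPi hQj]
      have hij' : (i : ℚ) + (j : ℚ) = (m : ℚ) := by exact_mod_cast hsum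
      have hij'' : (i : ℚ) * t + (j : ℚ) * t = (m : ℚ) * t := by
        linear_combination t * hij'
      linarith [hgeP, hgeQ, hij'']
    linarith

include hm in
lemma pgval_C {c : K} (hc : c ≠ 0) (t : ℚ) : pgval ν (C c) t = ν c := by
  have hC : (C c : K[X]) ≠ 0 := by simpa using hc
  have h0 : (0 : ℕ) ∈ (C c : K[X]).support := by
    rw [Polynomial.mem_support_iff]; simpa using hc
  refine le_antisymm ?_ ?_
  · have := pgval_le ν h0 t
    simpa using this
  · apply pgval_ge ν hC
    intro n hn
    have hne : (C c : K[X]).coeff n ≠ 0 := Polynomial.mem_support_iff.mp hn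
    rw [Polynomial.coeff_C] at hne ⊢
    by_cases h : n = 0
    · subst h; simp
    · simp [h] at hne
include hm in
lemma pgval_X (t : ℚ) : pgval ν (X : K[X]) t = t := by
  have hX : (X : K[X]) ≠ 0 := Polynomial.X_ne_zero
  have h1 : (1 : ℕ) ∈ (X : K[X]).support := by
    rw [Polynomial.mem_support_iff]; simp
  refine le_antisymm ?_ ?_
  · have := pgval_le ν h1 t
    simpa [pv_one ν hm] using this
  · apply pgval_ge ν hX
    intro n hn
    have hne : (X : K[X]).coeff n ≠ 0 := Polynomial.mem_support_iff.mp hn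
    rw [Polynomial.coeff_X] at hne ⊢
    by_cases h : n = 1
    · subst h; simp [pv_one ν hm]
    · simp [Ne.symm h] at hne

include hm in
lemma pgval_X_sub_C {u : K} (hu : u ≠ 0) (t : ℚ) :
    pgval ν (X - C u) t = min t (ν u) := by
  have hP : (X - C u : K[X]) ≠ 0 := Polynomial.X_sub_C_ne_zero u
  have hc0 : (X - C u : K[X]).coeff 0 = -u := by simp
  have hc1 : (X - C u : K[X]).coeff 1 = 1 := by simp [Polynomial.coeff_X_one]
  have h0 : (0 : ℕ) ∈ (X - C u : K[X]).support := by
    rw [Polynomial.mem_support_iff, hc0]; simpa using hu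
  have h1 : (1 : ℕ) ∈ (X - C u : K[X]).support := by
    rw [Polynomial.mem_support_iff, hc1]; simp
  refine le_antisymm (le_min ?_ ?_) ?_
  · have := pgval_le ν h1 t
    rw [hc1, pv_one ν hm] at this
    simpa using this
  · have := pgval_le ν h0 t
    rw [hc0, pv_neg ν hm u hu] at this
    simpa using this
  · apply pgval_ge ν hP
    intro n hn
    have hne : (X - C u : K[X]).coeff n ≠ 0 := Polynomial.mem_support_iff.mp hn
    have hdeg : n ≤ 1 := by
      have := Polynomial.le_natDegree_of_mem_supp n hn
      calc n ≤ (X - C u : K[X]).natDegree := this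
        _ = 1 := Polynomial.natDegree_X_sub_C u
    interval_cases n
    · rw [hc0, pv_neg ν hm u hu]
      simp [min_le_right]
    · rw [hc1, pv_one ν hm]
      simp [min_le_left]

include hm hadd in
lemma pgval_pow {P : K[X]} (hP : P ≠ 0) (t : ℚ) (n : ℕ) :
    pgval ν (P ^ n) t = n * pgval ν P t := by
  induction n with
  | zero =>
      rw [pow_zero, ← Polynomial.C_1, pgval_C ν hm one_ne_zero, pv_one ν hm]
      push_cast; ring
  | succ k ih =>
      rw [pow_succ]
      rw [(pgval_mul ν hm hadd (pow_ne_zero k hP) hP t).2, ih]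
      push_cast; ring

include hm hadd in
lemma pgval_prod {ι : Type*} (s : Finset ι) (f : ι → K[X]) (hf : ∀ i ∈ s, f i ≠ 0) (t : ℚ) :
    (∏ i ∈ s, f i) ≠ 0 ∧ pgval ν (∏ i ∈ s, f i) t = ∑ i ∈ s, pgval ν (f i) t := by
  induction s using Finset.cons_induction with
  | empty =>
      constructor
      · simp
      · rw [Finset.prod_empty, Finset.sum_empty, ← Polynomial.C_1,
          pgval_C ν hm one_ne_zero, pv_one ν hm]
  | cons a s ha ih =>
      have hfa : f a ≠ 0 := hf a (Finset.mem_cons_self a s)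
      obtain ⟨hprod, hval⟩ := ih (fun i hi => hf i (Finset.mem_cons_of_mem hi))
      rw [Finset.prod_cons, Finset.sum_cons]
      obtain ⟨hne, heq⟩ := pgval_mul ν hm hadd hfa hprod t
      exact ⟨hne, by rw [heq, hval]⟩

lemma pgval_mono {P : K[X]} (hP : P ≠ 0) {t t' : ℚ} (h : t ≤ t') :
    pgval ν P t ≤ pgval ν P t' := by
  obtain ⟨n, hn, hv⟩ := pgval_exists ν hP t'
  rw [hv]
  calc pgval ν P t ≤ ν (P.coeff n) + n * t := pgval_le ν hn t
    _ ≤ ν (P.coeff n) + n * t' := by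
        have : (n : ℚ) * t ≤ n * t' := by
          apply mul_le_mul_of_nonneg_left h (by positivity)
        linarith

lemma pgval_strict_mono {P : K[X]} (hP : P ≠ 0) (hsupp : ∀ n ∈ P.support, 1 ≤ n)
    {t t' : ℚ} (h : t < t') : pgval ν P t < pgval ν P t' := by
  obtain ⟨n, hn, hv⟩ := pgval_exists ν hP t'
  rw [hv]
  have hn1 : 1 ≤ n := hsupp n hn
  calc pgval ν P t ≤ ν (P.coeff n) + n * t := pgval_le ν hn t
    _ < ν (P.coeff n) + n * t' := by
        have : (n : ℚ) * t < n * t' := by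
          apply mul_lt_mul_of_pos_left h
          exact_mod_cast Nat.lt_of_lt_of_le Nat.zero_lt_one hn1
        linarith

lemma pgval_diag {P : K[X]} (hP : P ≠ 0) (hsupp : ∀ n ∈ P.support, 1 ≤ n)
    {s x : ℚ} (h : s ≤ x) : pgval ν P s + (x - s) ≤ pgval ν P x := by
  obtain ⟨n, hn, hv⟩ := pgval_exists ν hP x
  rw [hv]
  have hn1 : (1 : ℚ) ≤ n := by exact_mod_cast hsupp n hn
  calc pgval ν P s + (x - s) ≤ (ν (P.coeff n) + n * s) + (x - s) := by
        linarith [pgval_le ν hn s]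
    _ ≤ ν (P.coeff n) + n * x := by nlinarith
lemma pgval_lipschitz {P : K[X]} (hP : P ≠ 0) {t t' : ℚ} (h : t ≤ t') :
    pgval ν P t' ≤ pgval ν P t + P.natDegree * (t' - t) := by
  obtain ⟨n, hn, hv⟩ := pgval_exists ν hP t
  have hnd : (n : ℚ) ≤ P.natDegree := by
    exact_mod_cast Polynomial.le_natDegree_of_mem_supp n hn
  calc pgval ν P t' ≤ ν (P.coeff n) + n * t' := pgval_le ν hn t'
    _ = (ν (P.coeff n) + n * t) + n * (t' - t) := by ring
    _ ≤ pgval ν P t + P.natDegree * (t' - t) := by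
        rw [← hv]
        have : (n : ℚ) * (t' - t) ≤ P.natDegree * (t' - t) :=
          mul_le_mul_of_nonneg_right hnd (by linarith)
        linarith

lemma qpow_pos {q : ℕ} (hq2 : 2 ≤ q) (i : ℕ) : 0 < q ^ i :=
  pow_pos (by omega) i

include hm hadd in
open Classical in
lemma pgval_comp {p e q : ℕ} [hp : Fact p.Prime] [hc : CharP K p] (hq : q = p ^ e)
    (hq2 : 2 ≤ q) {h₁ h₂ : K[X]} (h1ne : h₁ ≠ 0) (h2ne : h₂ ≠ 0)
    (hs₁ : ∀ n ∈ h₁.support, ∃ i : ℕ, n = q ^ i)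
    (hs₂ : ∀ n ∈ h₂.support, ∃ i : ℕ, n = q ^ i) (t : ℚ) :
    h₁.comp h₂ ≠ 0 ∧ pgval ν (h₁.comp h₂) t = pgval ν h₁ (pgval ν h₂ t) := by
  set G := pgval ν h₂ t with hG
  -- coefficient formula for composition
  have hcomp : ∀ k, (h₁.comp h₂).coeff k = ∑ n ∈ h₁.support, h₁.coeff n * (h₂ ^ n).coeff k := by
    intro k
    rw [Polynomial.comp_eq_sum_left, Polynomial.sum, Polynomial.finset_sum_coeff]
    exact Finset.sum_congr rfl fun n _ => by rw [Polynomial.coeff_C_mul]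
  -- maximal achievers
  have hA1 : (h₁.support.filter (fun n => ν (h₁.coeff n) + n * G = pgval ν h₁ G)).Nonempty := by
    obtain ⟨n, hn, hv⟩ := pgval_exists ν h1ne G
    exact ⟨n, Finset.mem_filter.mpr ⟨hn, hv.symm⟩⟩
  have hA2 : (h₂.support.filter (fun n => ν (h₂.coeff n) + n * t = G)).Nonempty := by
    obtain ⟨n, hn, hv⟩ := pgval_exists ν h2ne t
    exact ⟨n, Finset.mem_filter.mpr ⟨hn, hv.symm⟩⟩
  set mstar := (h₁.support.filter (fun n => ν (h₁.coeff n) + n * G = pgval ν h₁ G)).max' hA1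
    with hmstar
  set nstar := (h₂.support.filter (fun n => ν (h₂.coeff n) + n * t = G)).max' hA2 with hnstar
  have hmmem := Finset.max'_mem _ hA1
  have hnmem := Finset.max'_mem _ hA2
  rw [Finset.mem_filter] at hmmem hnmem
  obtain ⟨hmsupp, hmach⟩ := hmmem
  obtain ⟨hnsupp, hnach⟩ := hnmem
  have hmmax : ∀ n ∈ h₁.support, ν (h₁.coeff n) + n * G = pgval ν h₁ G → n ≤ mstar :=
    fun n hn hach => Finset.le_max' _ n (Finset.mem_filter.mpr ⟨hn, hach⟩)
  have hnmax : ∀ n ∈ h₂.support, ν (h₂.coeff n) + n * t = G → n ≤ nstar :=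
    fun n hn hach => Finset.le_max' _ n (Finset.mem_filter.mpr ⟨hn, hach⟩)
  obtain ⟨im, him⟩ := hs₁ mstar hmsupp
  have hmpos : 0 < mstar := him ▸ qpow_pos hq2 im
  have hnpos : 0 < nstar := by
    obtain ⟨i, hi⟩ := hs₂ nstar hnsupp
    exact hi ▸ qpow_pos hq2 i
  set kstar := mstar * nstar with hkstar
  have hmc : h₁.coeff mstar ≠ 0 := Polynomial.mem_support_iff.mp hmsupp
  have hnc : h₂.coeff nstar ≠ 0 := Polynomial.mem_support_iff.mp hnsupp
  -- power coefficient at the star point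
  have hppow : ∀ (a : ℕ), q ^ a = p ^ (e * a) := by
    intro a; rw [hq, ← pow_mul]
  have hstarcoeff : (h₂ ^ mstar).coeff kstar = (h₂.coeff nstar) ^ mstar := by
    rw [him, hppow im, coeff_pow_p_pow p (e * im)]
    have hdvd : p ^ (e * im) ∣ kstar := by
      rw [hkstar, him, hppow im]; exact Dvd.intro nstar rfl
    rw [if_pos hdvd, hkstar, him, hppow im,
      Nat.mul_div_cancel_left nstar (pow_pos hp.out.pos _)]
  have hstar_ne : (h₂ ^ mstar).coeff kstar ≠ 0 := by
    rw [hstarcoeff]; exact pow_ne_zero _ hnc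
  -- value of the star term
  have hstarval : ν (h₁.coeff mstar * (h₂ ^ mstar).coeff kstar)
      = pgval ν h₁ G - kstar * t := by
    rw [hm _ _ hmc hstar_ne, hstarcoeff, pv_pow ν hm _ hnc]
    have h1 : ν (h₁.coeff mstar) = pgval ν h₁ G - mstar * G := by linarith [hmach]
    have h2 : ν (h₂.coeff nstar) = G - nstar * t := by linarith [hnach]
    rw [h1, h2, hkstar]
    push_cast
    ring
  -- strict minimality of the star term
  have hstrict : ∀ n ∈ h₁.support, n ≠ mstar →
      h₁.coeff n * (h₂ ^ n).coeff kstar ≠ 0 →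
      ν (h₁.coeff mstar * (h₂ ^ mstar).coeff kstar) <
        ν (h₁.coeff n * (h₂ ^ n).coeff kstar) := by
    intro n hn hne hterm
    have hcn : h₁.coeff n ≠ 0 := left_ne_zero_of_mul hterm
    have hpn : (h₂ ^ n).coeff kstar ≠ 0 := right_ne_zero_of_mul hterm
    obtain ⟨a, ha⟩ := hs₁ n hn
    have hnpos' : 0 < n := ha ▸ qpow_pos hq2 a
    rw [hstarval, hm _ _ hcn hpn]
    have hach_le : pgval ν h₁ G ≤ ν (h₁.coeff n) + n * G := pgval_le ν hn G
    rcases lt_or_gt_of_ne hne with hlt | hgt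
    · -- n < mstar : use divisibility and the fact that kstar / n is not an achiever for h₂
      have halim : a < im := by
        by_contra hcon
        push_neg at hcon
        have : mstar ≤ n := by
          rw [him, ha]
          exact Nat.pow_le_pow_right (by omega) hcon
        omega
      set r := q ^ (im - a) with hr
      have hrn : n * r = mstar := by
        rw [ha, hr, him, ← pow_add]
        congr 1
        omega
      have hr2 : 2 ≤ r := by
        calc 2 ≤ q := hq2
        _ = q ^ 1 := (pow_one q).symm
        _ ≤ q ^ (im - a) := Nat.pow_le_pow_right (by omega) (by omega)
      have hkdiv : kstar = n * (r * nstar) := by rw [hkstar, ← hrn]; ring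
      have hncoeff : (h₂ ^ n).coeff kstar = (h₂.coeff (r * nstar)) ^ n := by
        rw [ha, hppow a, coeff_pow_p_pow p (e * a)]
        have hdvd : p ^ (e * a) ∣ kstar := by
          rw [hkdiv, ha, hppow a]; exact Dvd.intro _ rfl
        rw [if_pos hdvd, hkdiv, ha, hppow a,
          Nat.mul_div_cancel_left _ (pow_pos hp.out.pos _)]
      have hcrn : h₂.coeff (r * nstar) ≠ 0 := by
        intro hzero
        rw [hncoeff, hzero] at hpn
        exact hpn (zero_pow (by omega))
      have hrnsupp : r * nstar ∈ h₂.support := Polynomial.mem_support_iff.mpr hcrn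
      have hnotach : ν (h₂.coeff (r * nstar)) + (r * nstar : ℕ) * t ≠ G := by
        intro hach
        have := hnmax _ hrnsupp hach
        nlinarith [hnpos, hr2, this]
      have hstrict2 : G < ν (h₂.coeff (r * nstar)) + (r * nstar : ℕ) * t :=
        lt_of_le_of_ne (pgval_le ν hrnsupp t) (Ne.symm hnotach)
      rw [hncoeff, pv_pow ν hm _ hcrn]
      have hcast : (kstar : ℚ) = (n : ℚ) * ((r * nstar : ℕ) : ℚ) := by
        rw [hkdiv]; push_cast; ring
      have hnq : (0 : ℚ) < (n : ℚ) := by exact_mod_cast hnpos'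
      have hmul : (n : ℚ) * G < (n : ℚ) * (ν (h₂.coeff (r * nstar)) + ((r * nstar : ℕ) : ℚ) * t) :=
        mul_lt_mul_of_pos_left hstrict2 hnq
      have hcast' : (kstar : ℚ) * t = (n : ℚ) * (((r * nstar : ℕ) : ℚ) * t) := by
        rw [hcast]; ring
      nlinarith [hach_le, hmul, hcast']
    · -- n > mstar : h₁-term is strictly above the minimum
      have hnotach : ν (h₁.coeff n) + n * G ≠ pgval ν h₁ G := by
        intro hach
        have := hmmax n hn hach
        omega
      have hstrict1 : pgval ν h₁ G < ν (h₁.coeff n) + n * G :=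
        lt_of_le_of_ne hach_le (Ne.symm hnotach)
      -- lower bound for the power coefficient
      have hksupp : kstar ∈ (h₂ ^ n).support := Polynomial.mem_support_iff.mpr hpn
      have hpow_ne : (h₂ : K[X]) ^ n ≠ 0 := pow_ne_zero _ h2ne
      have hlow := pgval_le ν hksupp t
      rw [pgval_pow ν hm hadd h2ne t n] at hlow
      linarith [hstrict1, hlow]
  -- conclusion via the strict minimum
  have hsum := pv_sum_eq ν hm hadd h₁.support
    (fun n => h₁.coeff n * (h₂ ^ n).coeff kstar) mstar hmsupp
    (mul_ne_zero hmc hstar_ne) hstrict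
  obtain ⟨hne0, hval⟩ := hsum
  have hcoeffk : (h₁.comp h₂).coeff kstar ≠ 0 := by rw [hcomp]; exact hne0
  have hcompne : h₁.comp h₂ ≠ 0 := fun h => by simp [h] at hcoeffk
  refine ⟨hcompne, le_antisymm ?_ ?_⟩
  · have hksupp : kstar ∈ (h₁.comp h₂).support := Polynomial.mem_support_iff.mpr hcoeffk
    have h1 := pgval_le ν hksupp t
    have h2 : ν ((h₁.comp h₂).coeff kstar) = pgval ν h₁ G - kstar * t := by
      rw [hcomp]; rw [hval]; exact hstarval
    rw [h2] at h1
    linarith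
  · apply pgval_ge ν hcompne
    intro k hk
    have hck : (h₁.comp h₂).coeff k ≠ 0 := Polynomial.mem_support_iff.mp hk
    rw [hcomp] at hck ⊢
    have := pv_sum_le ν hadd h₁.support
      (fun n => h₁.coeff n * (h₂ ^ n).coeff k) (pgval ν h₁ G - k * t) ?_ hck
    · linarith [this]
    · intro n hn hterm
      have hcn : h₁.coeff n ≠ 0 := left_ne_zero_of_mul hterm
      have hpn : (h₂ ^ n).coeff k ≠ 0 := right_ne_zero_of_mul hterm
      have hach_le : pgval ν h₁ G ≤ ν (h₁.coeff n) + n * G := pgval_le ν hn G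
      have hksupp : k ∈ (h₂ ^ n).support := Polynomial.mem_support_iff.mpr hpn
      have hlow := pgval_le ν hksupp t
      rw [pgval_pow ν hm hadd h2ne t n] at hlow
      rw [hm _ _ hcn hpn]
      linarith [hach_le, hlow]

include hm in
lemma pgval_eq_self_of_large {P : K[X]} (h1 : (1 : ℕ) ∈ P.support) (hν1 : ν (P.coeff 1) = 0)
    (h0 : (0 : ℕ) ∉ P.support) {t : ℚ}
    (ht : 1 + ∑ n ∈ P.support.erase 1, |ν (P.coeff n)| ≤ t) : pgval ν P t = t := by
  have hP : P ≠ 0 := fun h => by simp [h] at h1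
  have hS : (0 : ℚ) ≤ ∑ n ∈ P.support.erase 1, |ν (P.coeff n)| :=
    Finset.sum_nonneg fun i _ => abs_nonneg _
  refine le_antisymm ?_ (pgval_ge ν hP ?_)
  · have := pgval_le ν h1 t
    rw [hν1] at this
    simpa using this
  · intro n hn
    by_cases hn1 : n = 1
    · subst hn1; rw [hν1]; simp
    · have hn0 : n ≠ 0 := fun h => h0 (h ▸ hn)
      have hn2 : 2 ≤ n := by omega
      have habs : |ν (P.coeff n)| ≤ ∑ m ∈ P.support.erase 1, |ν (P.coeff m)| :=
        Finset.single_le_sum (f := fun m => |ν (P.coeff m)|) (fun i _ => abs_nonneg _)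
          (Finset.mem_erase.mpr ⟨hn1, hn⟩)
      have hcast : (2 : ℚ) ≤ (n : ℚ) := by exact_mod_cast hn2
      nlinarith [mul_nonneg (by linarith : (0 : ℚ) ≤ (n : ℚ) - 2) (by linarith : (0 : ℚ) ≤ t),
        habs, neg_le_abs (ν (P.coeff n)), ht]

end GaussVal

section Inst
variable {F : Type*} [Field F] {K : Type*} [Field K] (σ : F →+* K) (ν : K → ℚ)
variable (hm : ∀ x y : K, x ≠ 0 → y ≠ 0 → ν (x * y) = ν x + ν y)
variable (hadd : ∀ x y : K, x ≠ 0 → y ≠ 0 → x + y ≠ 0 → min (ν x) (ν y) ≤ ν (x + y))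

lemma map_supp_eq (h : Polynomial F) : (h.map σ).support = h.support :=
  Polynomial.support_map_of_injective h σ.injective

lemma map_isqLin {q : ℕ} {h : Polynomial F} (hlin : IsqLin q h) :
    ∀ n ∈ (h.map σ).support, ∃ i : ℕ, n = q ^ i := by
  intro n hn
  rw [map_supp_eq] at hn
  exact hlin n (Polynomial.mem_support_iff.mp hn)

lemma supp_two_le {q : ℕ} (hq2 : 2 ≤ q) {h : Polynomial F} (hlin : IsqLin q h)
    {n : ℕ} (hn : n ∈ (h.map σ).support) (hn1 : n ≠ 1) : 2 ≤ n := by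
  obtain ⟨i, hi⟩ := map_isqLin σ hlin n hn
  rcases Nat.eq_zero_or_pos i with h0 | h1
  · exfalso; apply hn1; rw [hi, h0, pow_zero]
  · calc 2 ≤ q := hq2
      _ = q ^ 1 := (pow_one q).symm
      _ ≤ q ^ i := Nat.pow_le_pow_right (by omega) h1
      _ = n := hi.symm

lemma supp_one_le {q : ℕ} (hq2 : 2 ≤ q) {h : Polynomial F} (hlin : IsqLin q h) :
    ∀ n ∈ (h.map σ).support, 1 ≤ n := by
  intro n hn
  obtain ⟨i, hi⟩ := map_isqLin σ hlin n hn
  have : 0 < q ^ i := pow_pos (by omega) i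
  omega

include hm in
/-- Bridge between `lamNu` and the Gauss valuation characterization. -/
lemma lam_char {q : ℕ} (hq2 : 2 ≤ q) {H : Polynomial F}
    (hlin : IsqLin q H) (hd : 1 < H.natDegree) {a0 : F} (hcoeff : H.coeff 1 = a0)
    (ha0 : a0 ≠ 0) (hν0 : ν (σ a0) = 0) :
    ∃ c : ℚ, lamNu q (fun x => ν (σ x)) H = (c : ℝ) ∧
      (∀ s : ℚ, s < c ↔ pgval ν (H.map σ) s < s) := by
  classical
  set Hb := H.map σ with hHb
  have hHb1 : Hb.coeff 1 = σ a0 := by rw [hHb, Polynomial.coeff_map, hcoeff]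
  have hσa0 : σ a0 ≠ 0 := fun h => ha0 (σ.injective (by rw [h, map_zero]))
  have h1supp : (1 : ℕ) ∈ Hb.support := Polynomial.mem_support_iff.mpr (hHb1 ▸ hσa0)
  have hHbne : Hb ≠ 0 := fun h => by simp [h] at h1supp
  have hHne : H ≠ 0 := fun h => hHbne (by rw [hHb, h, Polynomial.map_zero])
  have hdeg : H.natDegree ∈ Hb.support := by
    rw [hHb, map_supp_eq]
    exact Polynomial.natDegree_mem_support_of_nonzero hHne
  have hE : (Hb.support.erase 1).Nonempty :=
    ⟨H.natDegree, Finset.mem_erase.mpr ⟨by omega, hdeg⟩⟩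
  set TT : Finset ℚ := (Hb.support.erase 1).image
    (fun n => ν (Hb.coeff n) / ((n : ℚ) - 1)) with hTT
  have hTTne : TT.Nonempty := hE.image _
  set c : ℚ := -TT.min' hTTne with hc
  -- the set in lamNu is the coercion of TT
  have hset : {y : ℝ | ∃ i : ℕ, 1 ≤ i ∧ H.coeff (q ^ i) ≠ 0 ∧
      y = ((ν (σ (H.coeff (q ^ i)))) : ℝ) / ((q : ℝ) ^ i - 1)}
      = ↑(TT.image (fun x : ℚ => (x : ℝ))) := by
    ext y
    simp only [Set.mem_setOf_eq, Finset.coe_image, Set.mem_image, Finset.mem_coe,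
      Finset.mem_image, hTT]
    constructor
    · rintro ⟨i, hi1, hne, hy⟩
      have hqi2 : 2 ≤ q ^ i := by
        calc 2 ≤ q := hq2
          _ = q ^ 1 := (pow_one q).symm
          _ ≤ q ^ i := Nat.pow_le_pow_right (by omega) hi1
      have hsupp : q ^ i ∈ Hb.support := by
        rw [hHb, map_supp_eq]
        exact Polynomial.mem_support_iff.mpr hne
      refine ⟨ν (Hb.coeff (q ^ i)) / ((q ^ i : ℕ) - 1 : ℚ), ⟨q ^ i, ?_, rfl⟩, ?_⟩
      · exact Finset.mem_erase.mpr ⟨by omega, hsupp⟩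
      · rw [hy, hHb, Polynomial.coeff_map]
        push_cast
        norm_num
    · rintro ⟨x, ⟨n, hn, hx⟩, hxy⟩
      have hn1 : n ≠ 1 := (Finset.mem_erase.mp hn).1
      have hnsupp : n ∈ Hb.support := (Finset.mem_erase.mp hn).2
      obtain ⟨i, hi⟩ := map_isqLin σ hlin n hnsupp
      have hi1 : 1 ≤ i := by
        rcases Nat.eq_zero_or_pos i with h0 | h1
        · exfalso; apply hn1; rw [hi, h0, pow_zero]
        · exact h1
      have hne : H.coeff (q ^ i) ≠ 0 := by
        rw [← hi]
        intro hzero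
        have : Hb.coeff n = 0 := by rw [hHb, Polynomial.coeff_map, hzero, map_zero]
        exact Polynomial.mem_support_iff.mp hnsupp this
      refine ⟨i, hi1, hne, ?_⟩
      rw [← hxy, ← hx, hi, hHb, Polynomial.coeff_map]
      push_cast
      norm_num
  have hmin : sInf (↑(TT.image (fun x : ℚ => (x : ℝ))) : Set ℝ)
      = ((TT.min' hTTne : ℚ) : ℝ) := by
    rw [Finset.Nonempty.csInf_eq_min' (hTTne.image _)]
    rw [Finset.min'_image Rat.cast_mono]
  refine ⟨c, ?_, ?_⟩
  · rw [lamNu, hset, hmin, hc]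
    push_cast
    ring
  · intro s
    constructor
    · intro hs
      -- the minimum witnesses pgval < s
      obtain ⟨n, hn, hval⟩ := Finset.mem_image.mp (Finset.min'_mem TT hTTne)
      have hn1 : n ≠ 1 := (Finset.mem_erase.mp hn).1
      have hnsupp : n ∈ Hb.support := (Finset.mem_erase.mp hn).2
      have hn2 : 2 ≤ n := supp_two_le σ hq2 hlin hnsupp hn1
      have hlt : ν (Hb.coeff n) / ((n : ℚ) - 1) < -s := by
        rw [hc] at hs; linarith [hval]
      have hn1q : (0 : ℚ) < (n : ℚ) - 1 := by
        have : (2 : ℚ) ≤ (n : ℚ) := by exact_mod_cast hn2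
        linarith
      have hlt2 : ν (Hb.coeff n) < -s * ((n : ℚ) - 1) := by
        rw [div_lt_iff₀ hn1q] at hlt
        linarith [hlt]
      calc pgval ν Hb s ≤ ν (Hb.coeff n) + n * s := pgval_le ν hnsupp s
        _ < s := by nlinarith
    · intro hs
      obtain ⟨n, hn, hv⟩ := pgval_exists ν hHbne s
      rw [hv] at hs
      have hn1 : n ≠ 1 := by
        intro h1
        rw [h1, hHb1, hν0] at hs
        simp at hs
      have hn2 : 2 ≤ n := supp_two_le σ hq2 hlin hn hn1
      have hn1q : (0 : ℚ) < (n : ℚ) - 1 := by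
        have : (2 : ℚ) ≤ (n : ℚ) := by exact_mod_cast hn2
        linarith
      have hmem : ν (Hb.coeff n) / ((n : ℚ) - 1) ∈ TT := by
        rw [hTT, Finset.mem_image]
        exact ⟨n, Finset.mem_erase.mpr ⟨hn1, hn⟩, rfl⟩
      have hminle := Finset.min'_le TT _ hmem
      have : ν (Hb.coeff n) / ((n : ℚ) - 1) < -s := by
        rw [div_lt_iff₀ hn1q]
        nlinarith
      rw [hc]
      linarith

include hm hadd in
/-- For a normalized isogeny `f : φ → ψ`, the lambda invariant of `ψ` equals the Gauss
valuation of `f` at the lambda invariant of `φ`. -/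
lemma conj_lam {p e q : ℕ} [hp : Fact p.Prime] [hcp : CharP K p] (hq : q = p ^ e)
    (hq2 : 2 ≤ q) {f φ ψ : Polynomial F} (hlinf : IsqLin q f) (hlinφ : IsqLin q φ)
    (hlinψ : IsqLin q ψ) (hf1 : f.coeff 1 = 1) (hφ1 : φ.coeff 1 ≠ 0)
    (hc : f.comp φ = ψ.comp f) {cφ cψ : ℚ}
    (hφiff : ∀ s : ℚ, s < cφ ↔ pgval ν (φ.map σ) s < s)
    (hψiff : ∀ s : ℚ, s < cψ ↔ pgval ν (ψ.map σ) s < s)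
    (hφa : pgval ν (φ.map σ) cφ ≤ cφ) :
    cψ = pgval ν (f.map σ) cφ := by
  set fb := f.map σ with hfb
  set φb := φ.map σ with hφb
  set ψb := ψ.map σ with hψb
  have hfb1 : fb.coeff 1 = 1 := by rw [hfb, Polynomial.coeff_map, hf1, map_one]
  have hfb1supp : (1 : ℕ) ∈ fb.support := Polynomial.mem_support_iff.mpr (by rw [hfb1]; simp)
  have hfbne : fb ≠ 0 := fun h => by simp [h] at hfb1supp
  have hφbne : φb ≠ 0 := by
    intro h
    apply hφ1
    have : φb.coeff 1 = 0 := by rw [h]; simp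
    rw [hφb, Polynomial.coeff_map] at this
    exact σ.injective (by rw [this, map_zero])
  have hmapc : fb.comp φb = ψb.comp fb := by
    rw [hfb, hφb, hψb, ← Polynomial.map_comp, ← Polynomial.map_comp, hc]
  have hψbne : ψb ≠ 0 := by
    intro h
    have hcomp := (pgval_comp ν hm hadd hq hq2 hfbne hφbne
      (map_isqLin σ hlinf) (map_isqLin σ hlinφ) 0).1
    rw [hmapc, h] at hcomp
    simp at hcomp
  have key : ∀ t : ℚ, pgval ν ψb (pgval ν fb t) = pgval ν fb (pgval ν φb t) := by
    intro t
    have h1 := pgval_comp ν hm hadd hq hq2 hψbne hfbne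
      (map_isqLin σ hlinψ) (map_isqLin σ hlinf) t
    have h2 := pgval_comp ν hm hadd hq hq2 hfbne hφbne
      (map_isqLin σ hlinf) (map_isqLin σ hlinφ) t
    rw [← h1.2, ← h2.2, hmapc]
  have hφeq : pgval ν φb cφ = cφ := by
    refine le_antisymm hφa ?_
    by_contra hcon
    push_neg at hcon
    exact lt_irrefl cφ ((hφiff cφ).mpr hcon)
  set x := pgval ν fb cφ with hx
  have hψx : pgval ν ψb x = x := by
    rw [hx, key cφ, hφeq]
  -- upper bound
  have hub : cψ ≤ x := by
    by_contra hcon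
    push_neg at hcon
    have := (hψiff x).mp hcon
    rw [hψx] at this
    exact lt_irrefl _ this
  -- lower bound
  have hlb : x ≤ cψ := by
    refine le_of_forall_lt fun s hs => ?_
    rw [hψiff s]
    have hfsupp1 : ∀ n ∈ fb.support, 1 ≤ n := supp_one_le σ hq2 hlinf
    have hψsupp1 : ∀ n ∈ ψb.support, 1 ≤ n := supp_one_le σ hq2 hlinψ
    have hNnat : 1 ≤ fb.natDegree := Polynomial.le_natDegree_of_mem_supp 1 hfb1supp
    have hN : (1 : ℚ) ≤ (fb.natDegree : ℚ) := by exact_mod_cast hNnat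
    set t := cφ - (x - s) / (fb.natDegree : ℚ) with ht
    have htlt : t < cφ := by
      rw [ht]
      have : (0 : ℚ) < (x - s) / (fb.natDegree : ℚ) := by
        apply div_pos (by linarith) (by linarith)
      linarith
    have hxt : s ≤ pgval ν fb t := by
      have hlip := pgval_lipschitz ν hfbne (le_of_lt htlt)
      have : (fb.natDegree : ℚ) * (cφ - t) = x - s := by
        rw [ht]
        field_simp
        ring
      rw [this] at hlip
      rw [← hx] at hlip
      linarith
    have hdiag := pgval_diag ν hψbne hψsupp1 hxt
    have hkey := key t
    have hstrict : pgval ν fb (pgval ν φb t) < pgval ν fb t := by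
      apply pgval_strict_mono ν hfbne hfsupp1
      exact (hφiff t).mp htlt
    rw [hkey] at hdiag
    linarith
  linarith

end Inst

section Inst2
open scoped Classical
variable {F : Type*} [Field F]

local notation "KK" => AlgebraicClosure F
local notation "σκ" => algebraMap F (AlgebraicClosure F)

lemma derivative_eq_one {q : ℕ} (hq2 : 2 ≤ q) (hqF : (q : F) = 0) {h : Polynomial F}
    (hlin : IsqLin q h) (h1 : h.coeff 1 = 1) : Polynomial.derivative h = 1 := by
  ext k
  rw [Polynomial.coeff_derivative, Polynomial.coeff_one]
  by_cases hk : k = 0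
  · subst hk
    rw [h1]
    norm_num
  · rw [if_neg hk]
    by_cases hc : h.coeff (k + 1) = 0
    · rw [hc]; ring
    · obtain ⟨i, hi⟩ := hlin (k + 1) hc
      have hi1 : 1 ≤ i := by
        rcases Nat.eq_zero_or_pos i with h0 | hpos
        · exfalso; rw [h0, pow_zero] at hi; omega
        · exact hpos
      have hcast : ((k : F) + 1) = 0 := by
        have : ((k + 1 : ℕ) : F) = ((q ^ i : ℕ) : F) := by exact_mod_cast congrArg _ hi
        push_cast at this
        rw [this, hqF]
        exact zero_pow (by omega)
      rw [hcast]
      ring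

lemma poly_fact {q : ℕ} (hq2 : 2 ≤ q) (hqF : (q : F) = 0) {h : Polynomial F}
    (hlin : IsqLin q h) (h1 : h.coeff 1 = 1) :
    (h.map σκ) ≠ 0 ∧
    (h.map σκ) = Polynomial.C (h.map σκ).leadingCoeff *
      ∏ w ∈ (h.map σκ).roots.toFinset, (X - Polynomial.C w) ∧
    kerSet h = ↑(h.map σκ).roots.toFinset ∧ (0 : KK) ∈ (h.map σκ).roots.toFinset := by
  classical
  set hb := h.map σκ with hhb
  have hb1 : hb.coeff 1 = 1 := by rw [hhb, Polynomial.coeff_map, h1, map_one]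
  have h1supp : (1 : ℕ) ∈ hb.support := Polynomial.mem_support_iff.mpr (by rw [hb1]; simp)
  have hbne : hb ≠ 0 := fun hh => by simp [hh] at h1supp
  have hsep : h.Separable := by
    rw [Polynomial.separable_def, derivative_eq_one hq2 hqF hlin h1]
    exact isCoprime_one_right
  have hsepb : hb.Separable := hsep.map
  have hnodup : hb.roots.Nodup := Polynomial.nodup_roots hsepb
  have hsplits : hb.Splits := IsAlgClosed.splits hb
  have hcard : hb.roots.card = hb.natDegree := (Polynomial.splits_iff_card_roots).mp hsplits
  have hprod := Polynomial.C_leadingCoeff_mul_prod_multiset_X_sub_C hcard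
  refine ⟨hbne, ?_, ?_, ?_⟩
  · conv_lhs => rw [← hprod]
    congr 1
    rw [Finset.prod_eq_multiset_prod, Multiset.toFinset_val,
      Multiset.dedup_eq_self.mpr hnodup]
  · ext β
    have : (Polynomial.aeval β h = 0) ↔ hb.eval β = 0 := by
      rw [hhb, Polynomial.eval_map, Polynomial.aeval_def]
    rw [kerSet, Set.mem_setOf_eq, this]
    simp only [Finset.coe_sort_coe, Multiset.mem_toFinset, Finset.mem_coe]
    rw [Polynomial.mem_roots hbne]
    exact ⟨fun hh => hh, fun hh => hh⟩
  · rw [Multiset.mem_toFinset, Polynomial.mem_roots hbne]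
    have hc0 : h.coeff 0 = 0 := by
      by_contra hc
      obtain ⟨i, hi⟩ := hlin 0 hc
      have : 0 < q ^ i := pow_pos (by omega) i
      omega
    rw [Polynomial.IsRoot, ← Polynomial.coeff_zero_eq_eval_zero, hhb,
      Polynomial.coeff_map, hc0, map_zero]

lemma fact_ineq (ν : KK → ℚ)
    (hm : ∀ x y : KK, x ≠ 0 → y ≠ 0 → ν (x * y) = ν x + ν y)
    (hadd : ∀ x y : KK, x ≠ 0 → y ≠ 0 → x + y ≠ 0 → min (ν x) (ν y) ≤ ν (x + y))
    {q : ℕ} (hq2 : 2 ≤ q) (hqF : (q : F) = 0)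
    {f g ℓ : Polynomial F} (hf : IsqLin q f) (hg : IsqLin q g) (hℓ : IsqLin q ℓ)
    (hfn : f.coeff 1 = 1) (hgn : g.coeff 1 = 1) (hℓn : ℓ.coeff 1 = 1)
    (hkerInt : kerSet f ∩ kerSet g = {0})
    (hkerSum : kerSet ℓ = kerSet f + kerSet g) (t : ℚ) :
    t + pgval ν (ℓ.map σκ) t ≤ pgval ν (f.map σκ) t + pgval ν (g.map σκ) t := by
  obtain ⟨hfne, hfprod, hfker, h0W⟩ := poly_fact hq2 hqF hf hfn
  obtain ⟨hgne, hgprod, hgker, h0V⟩ := poly_fact hq2 hqF hg hgn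
  obtain ⟨hlne, hlprod, hlker, h0U⟩ := poly_fact hq2 hqF hℓ hℓn
  set fb := f.map σκ with hfb
  set gb := g.map σκ with hgb
  set lb := ℓ.map σκ with hlb
  set W := fb.roots.toFinset with hW
  set V := gb.roots.toFinset with hV
  set U := lb.roots.toFinset with hU
  -- kernel relations at the Finset level
  have hWV : W ∩ V = {0} := by
    apply Finset.coe_injective
    rw [Finset.coe_inter, ← hfker, ← hgker, hkerInt, Finset.coe_singleton]
  have hWU : W ⊆ U := by
    intro w hw
    have hwf : (w : KK) ∈ kerSet f := by rw [hfker]; exact_mod_cast hw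
    have h0g : (0 : KK) ∈ kerSet g := by rw [hgker]; exact_mod_cast h0V
    have : (w : KK) ∈ kerSet ℓ := by
      rw [hkerSum]
      have := Set.add_mem_add hwf h0g
      simpa using this
    rw [hlker] at this
    exact_mod_cast this
  have hVU : V ⊆ U := by
    intro v hv
    have hvg : (v : KK) ∈ kerSet g := by rw [hgker]; exact_mod_cast hv
    have h0f : (0 : KK) ∈ kerSet f := by rw [hfker]; exact_mod_cast h0W
    have : (v : KK) ∈ kerSet ℓ := by
      rw [hkerSum]
      have := Set.add_mem_add h0f hvg
      simpa using this
    rw [hlker] at this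
    exact_mod_cast this
  set M := U \ (W ∪ V) with hM
  have hM0 : ∀ u ∈ M, u ≠ 0 := by
    intro u hu hu0
    rw [hM, Finset.mem_sdiff] at hu
    exact hu.2 (Finset.mem_union_left _ (hu0 ▸ h0W))
  -- partition of U
  have d1 : Disjoint W (V.erase 0) := by
    rw [Finset.disjoint_left]
    intro x hxW hxV
    have hxV' : x ∈ V := Finset.mem_of_mem_erase hxV
    have : x ∈ W ∩ V := Finset.mem_inter.mpr ⟨hxW, hxV'⟩
    rw [hWV, Finset.mem_singleton] at this
    exact (Finset.ne_of_mem_erase hxV) this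
  have d2 : Disjoint (W ∪ V.erase 0) M := by
    rw [Finset.disjoint_left]
    intro x hx hxM
    rw [hM, Finset.mem_sdiff] at hxM
    apply hxM.2
    rcases Finset.mem_union.mp hx with h | h
    · exact Finset.mem_union_left _ h
    · exact Finset.mem_union_right _ (Finset.mem_of_mem_erase h)
  have hpart : (W ∪ V.erase 0) ∪ M = U := by
    ext x
    constructor
    · intro hx
      rcases Finset.mem_union.mp hx with h | h
      · rcases Finset.mem_union.mp h with h' | h'
        · exact hWU h'
        · exact hVU (Finset.mem_of_mem_erase h')
      · rw [hM, Finset.mem_sdiff] at h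
        exact h.1
    · intro hx
      by_cases hxW : x ∈ W
      · exact Finset.mem_union_left _ (Finset.mem_union_left _ hxW)
      · by_cases hxV : x ∈ V
        · have hx0 : x ≠ 0 := by
            intro h0
            exact hxW (h0 ▸ h0W)
          exact Finset.mem_union_left _ (Finset.mem_union_right _
            (Finset.mem_erase.mpr ⟨hx0, hxV⟩))
        · refine Finset.mem_union_right _ ?_
          rw [hM, Finset.mem_sdiff]
          exact ⟨hx, fun hcon => by
            rcases Finset.mem_union.mp hcon with h | h
            · exact hxW h
            · exact hxV h⟩
  -- product identities
  have hPU : ∏ u ∈ U, (X - Polynomial.C u)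
      = ((∏ w ∈ W, (X - Polynomial.C w)) * (∏ v ∈ V.erase 0, (X - Polynomial.C v))) *
        (∏ u ∈ M, (X - Polynomial.C u)) := by
    rw [← hpart, Finset.prod_union d2, Finset.prod_union d1]
  have hPV : ∏ v ∈ V, (X - Polynomial.C v)
      = X * ∏ v ∈ V.erase 0, (X - Polynomial.C v) := by
    rw [← Finset.mul_prod_erase V _ h0V, Polynomial.C_0, sub_zero]
  set cf := fb.leadingCoeff with hcf
  set cg := gb.leadingCoeff with hcg
  set cl := lb.leadingCoeff with hcl
  have hident : X * lb * (Polynomial.C cf * Polynomial.C cg)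
      = Polynomial.C cl * ((fb * gb) * ∏ u ∈ M, (X - Polynomial.C u)) := by
    calc X * lb * (Polynomial.C cf * Polynomial.C cg)
        = X * (Polynomial.C cl * ∏ u ∈ U, (X - Polynomial.C u)) *
          (Polynomial.C cf * Polynomial.C cg) := by rw [← hlprod]
      _ = Polynomial.C cl *
          (((Polynomial.C cf * ∏ w ∈ W, (X - Polynomial.C w)) *
            (Polynomial.C cg * (X * ∏ v ∈ V.erase 0, (X - Polynomial.C v)))) *
            ∏ u ∈ M, (X - Polynomial.C u)) := by rw [hPU]; ring
      _ = Polynomial.C cl * ((fb * gb) * ∏ u ∈ M, (X - Polynomial.C u)) := by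
          rw [← hPV, ← hfprod, ← hgprod]
  -- nonvanishing
  have hcfne : cf ≠ 0 := Polynomial.leadingCoeff_ne_zero.mpr hfne
  have hcgne : cg ≠ 0 := Polynomial.leadingCoeff_ne_zero.mpr hgne
  have hclne : cl ≠ 0 := Polynomial.leadingCoeff_ne_zero.mpr hlne
  have hCfne : (Polynomial.C cf : KK[X]) ≠ 0 := by simpa using hcfne
  have hCgne : (Polynomial.C cg : KK[X]) ≠ 0 := by simpa using hcgne
  have hClne : (Polynomial.C cl : KK[X]) ≠ 0 := by simpa using hclne
  have hXne : (X : KK[X]) ≠ 0 := Polynomial.X_ne_zero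
  have hMne : ∀ u ∈ M, (X - Polynomial.C u : KK[X]) ≠ 0 :=
    fun u _ => Polynomial.X_sub_C_ne_zero u
  -- the valuation identity, for every slope
  have EQ : ∀ s : ℚ, s + pgval ν lb s + (ν cf + ν cg)
      = ν cl + ((pgval ν fb s + pgval ν gb s) + ∑ u ∈ M, min s (ν u)) := by
    intro s
    obtain ⟨hPMne, hPMval⟩ := pgval_prod ν hm hadd M (fun u => X - Polynomial.C u) hMne s
    have hPMval' : pgval ν (∏ u ∈ M, (X - Polynomial.C u)) s = ∑ u ∈ M, min s (ν u) := by
      rw [hPMval]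
      exact Finset.sum_congr rfl fun u hu => pgval_X_sub_C ν hm (hM0 u hu) s
    have e1 := pgval_mul ν hm hadd hXne hlne s
    have e2 := pgval_mul ν hm hadd hCfne hCgne s
    have e3 := pgval_mul ν hm hadd e1.1 e2.1 s
    have e4 := pgval_mul ν hm hadd hfne hgne s
    have e5 := pgval_mul ν hm hadd e4.1 hPMne s
    have e6 := pgval_mul ν hm hadd hClne e5.1 s
    have hLHS : pgval ν (X * lb * (Polynomial.C cf * Polynomial.C cg)) s
        = s + pgval ν lb s + (ν cf + ν cg) := by
      rw [e3.2, e1.2, e2.2, pgval_X ν hm, pgval_C ν hm hcfne, pgval_C ν hm hcgne]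
    have hRHS : pgval ν (Polynomial.C cl * ((fb * gb) * ∏ u ∈ M, (X - Polynomial.C u))) s
        = ν cl + ((pgval ν fb s + pgval ν gb s) + ∑ u ∈ M, min s (ν u)) := by
      rw [e6.2, e5.2, e4.2, pgval_C ν hm hclne, hPMval']
    rw [← hLHS, ← hRHS, hident]
  -- evaluate at a large slope to identify the leading coefficients
  have hfb1 : fb.coeff 1 = 1 := by rw [hfb, Polynomial.coeff_map, hfn, map_one]
  have hgb1 : gb.coeff 1 = 1 := by rw [hgb, Polynomial.coeff_map, hgn, map_one]
  have hlb1 : lb.coeff 1 = 1 := by rw [hlb, Polynomial.coeff_map, hℓn, map_one]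
  have hν1 : ν (1 : KK) = 0 := pv_one ν hm
  have h1f : (1 : ℕ) ∈ fb.support := Polynomial.mem_support_iff.mpr (by rw [hfb1]; simp)
  have h1g : (1 : ℕ) ∈ gb.support := Polynomial.mem_support_iff.mpr (by rw [hgb1]; simp)
  have h1l : (1 : ℕ) ∈ lb.support := Polynomial.mem_support_iff.mpr (by rw [hlb1]; simp)
  have h0f : (0 : ℕ) ∉ fb.support := fun hc => by
    have := supp_one_le σκ hq2 hf 0 hc; omega
  have h0g : (0 : ℕ) ∉ gb.support := fun hc => by
    have := supp_one_le σκ hq2 hg 0 hc; omega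
  have h0l : (0 : ℕ) ∉ lb.support := fun hc => by
    have := supp_one_le σκ hq2 hℓ 0 hc; omega
  set Sf := ∑ n ∈ fb.support.erase 1, |ν (fb.coeff n)| with hSf
  set Sg := ∑ n ∈ gb.support.erase 1, |ν (gb.coeff n)| with hSg
  set Sl := ∑ n ∈ lb.support.erase 1, |ν (lb.coeff n)| with hSl
  set SM := ∑ u ∈ M, |ν u| with hSM
  have hSf0 : 0 ≤ Sf := Finset.sum_nonneg fun i _ => abs_nonneg _
  have hSg0 : 0 ≤ Sg := Finset.sum_nonneg fun i _ => abs_nonneg _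
  have hSl0 : 0 ≤ Sl := Finset.sum_nonneg fun i _ => abs_nonneg _
  have hSM0 : 0 ≤ SM := Finset.sum_nonneg fun i _ => abs_nonneg _
  set t0 := 1 + Sf + Sg + Sl + SM with ht0
  have hft0 : pgval ν fb t0 = t0 :=
    pgval_eq_self_of_large ν hm h1f (by rw [hfb1, hν1]) h0f (by rw [ht0]; linarith)
  have hgt0 : pgval ν gb t0 = t0 :=
    pgval_eq_self_of_large ν hm h1g (by rw [hgb1, hν1]) h0g (by rw [ht0]; linarith)
  have hlt0 : pgval ν lb t0 = t0 :=
    pgval_eq_self_of_large ν hm h1l (by rw [hlb1, hν1]) h0l (by rw [ht0]; linarith)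
  have hmint0 : ∑ u ∈ M, min t0 (ν u) = ∑ u ∈ M, ν u := by
    apply Finset.sum_congr rfl
    intro u hu
    apply min_eq_right
    have h1 : ν u ≤ |ν u| := le_abs_self _
    have h2 : |ν u| ≤ SM :=
      Finset.single_le_sum (f := fun u => |ν u|) (fun i _ => abs_nonneg _) hu
    rw [ht0]
    linarith
  have hEQt0 := EQ t0
  rw [hft0, hgt0, hlt0, hmint0] at hEQt0
  -- hence ν cf + ν cg = ν cl + ∑ ν u
  have hlead : ν cf + ν cg = ν cl + ∑ u ∈ M, ν u := by linarith
  -- conclude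
  have hEQt := EQ t
  have hminle : ∑ u ∈ M, min t (ν u) ≤ ∑ u ∈ M, ν u :=
    Finset.sum_le_sum fun u _ => min_le_right _ _
  linarith

end Inst2

end

theorem stmt1 {Fq F : Type*} [Field Fq] [Fintype Fq] [Field F] [Algebra Fq F]
    (q : ℕ) (hq : q = Fintype.card Fq)
    (ν : AlgebraicClosure F → ℚ)
    (hmul : ∀ x y : AlgebraicClosure F, x ≠ 0 → y ≠ 0 → ν (x * y) = ν x + ν y)
    (hadd : ∀ x y : AlgebraicClosure F, x ≠ 0 → y ≠ 0 → x + y ≠ 0 →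
      min (ν x) (ν y) ≤ ν (x + y))
    (a : F) (ha : a ≠ 0) (hνa : ν (algebraMap F (AlgebraicClosure F) a) = 0)
    (φ ψ₁ ψ₂ ψ₃ : Polynomial F)
    (hφ : IsqLin q φ) (hψ₁ : IsqLin q ψ₁) (hψ₂ : IsqLin q ψ₂) (hψ₃ : IsqLin q ψ₃)
    (hdφ : 1 < φ.natDegree) (hd₁ : 1 < ψ₁.natDegree) (hd₂ : 1 < ψ₂.natDegree)
    (hd₃ : 1 < ψ₃.natDegree)
    (hφa : φ.coeff 1 = a) (h₁a : ψ₁.coeff 1 = a) (h₂a : ψ₂.coeff 1 = a)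
    (h₃a : ψ₃.coeff 1 = a)
    (f g ℓ : Polynomial F) (hf : IsqLin q f) (hg : IsqLin q g) (hℓ : IsqLin q ℓ)
    (hfn : f.coeff 1 = 1) (hgn : g.coeff 1 = 1) (hℓn : ℓ.coeff 1 = 1)
    (hcf : f.comp φ = ψ₁.comp f) (hcg : g.comp φ = ψ₂.comp g)
    (hcℓ : ℓ.comp φ = ψ₃.comp ℓ)
    (hkerInt : kerSet f ∩ kerSet g = {0})
    (hkerSum : kerSet ℓ = kerSet f + kerSet g) :
    lamNu q (fun x => ν (algebraMap F (AlgebraicClosure F) x)) φ +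
        lamNu q (fun x => ν (algebraMap F (AlgebraicClosure F) x)) ψ₃ ≤
      lamNu q (fun x => ν (algebraMap F (AlgebraicClosure F) x)) ψ₁ +
        lamNu q (fun x => ν (algebraMap F (AlgebraicClosure F) x)) ψ₂ := by
  have hq2 : 2 ≤ q := by rw [hq]; exact Fintype.one_lt_card
  -- characteristic setup
  set p := ringChar Fq with hpdef
  haveI hcFq : CharP Fq p := ringChar.charP Fq
  obtain ⟨n, hpprime, hcard⟩ := FiniteField.card Fq p
  haveI hpfact : Fact p.Prime := ⟨hpprime⟩
  have hqpe : q = p ^ (n : ℕ) := by rw [hq]; exact hcard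
  haveI hcF : CharP F p := charP_of_injective_algebraMap (algebraMap Fq F).injective p
  haveI hcK : CharP (AlgebraicClosure F) p :=
    charP_of_injective_algebraMap (algebraMap F (AlgebraicClosure F)).injective p
  have hqF : (q : F) = 0 := by
    rw [hqpe]
    push_cast
    rw [CharP.cast_eq_zero F p]
    exact zero_pow (by exact_mod_cast n.pos.ne')
  -- lambda characterizations via Gauss valuations
  obtain ⟨c₀, hlam0, hiff0⟩ := lam_char (algebraMap F (AlgebraicClosure F)) ν hmul
    hq2 hφ hdφ hφa ha hνa
  obtain ⟨c₁, hlam1, hiff1⟩ := lam_char (algebraMap F (AlgebraicClosure F)) ν hmul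
    hq2 hψ₁ hd₁ h₁a ha hνa
  obtain ⟨c₂, hlam2, hiff2⟩ := lam_char (algebraMap F (AlgebraicClosure F)) ν hmul
    hq2 hψ₂ hd₂ h₂a ha hνa
  obtain ⟨c₃, hlam3, hiff3⟩ := lam_char (algebraMap F (AlgebraicClosure F)) ν hmul
    hq2 hψ₃ hd₃ h₃a ha hνa
  -- the Gauss valuation of φ at its own lambda invariant is at most the invariant
  have hφ1ne : φ.coeff 1 ≠ 0 := by rw [hφa]; exact ha
  have hφle : pgval ν (φ.map (algebraMap F (AlgebraicClosure F))) c₀ ≤ c₀ := by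
    have hcoeff1 : (φ.map (algebraMap F (AlgebraicClosure F))).coeff 1
        = algebraMap F (AlgebraicClosure F) a := by rw [Polynomial.coeff_map, hφa]
    have hane : algebraMap F (AlgebraicClosure F) a ≠ 0 := fun h =>
      ha ((algebraMap F (AlgebraicClosure F)).injective (by rw [h, map_zero]))
    have h1supp : (1 : ℕ) ∈ (φ.map (algebraMap F (AlgebraicClosure F))).support :=
      Polynomial.mem_support_iff.mpr (hcoeff1 ▸ hane)
    have := pgval_le ν h1supp c₀
    rw [hcoeff1, hνa] at this
    simpa using this
  -- isogeny conjugation identities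
  have e1 : c₁ = pgval ν (f.map (algebraMap F (AlgebraicClosure F))) c₀ :=
    conj_lam (algebraMap F (AlgebraicClosure F)) ν hmul hadd hqpe hq2
      hf hφ hψ₁ hfn hφ1ne hcf hiff0 hiff1 hφle
  have e2 : c₂ = pgval ν (g.map (algebraMap F (AlgebraicClosure F))) c₀ :=
    conj_lam (algebraMap F (AlgebraicClosure F)) ν hmul hadd hqpe hq2
      hg hφ hψ₂ hgn hφ1ne hcg hiff0 hiff2 hφle
  have e3 : c₃ = pgval ν (ℓ.map (algebraMap F (AlgebraicClosure F))) c₀ :=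
    conj_lam (algebraMap F (AlgebraicClosure F)) ν hmul hadd hqpe hq2
      hℓ hφ hψ₃ hℓn hφ1ne hcℓ hiff0 hiff3 hφle
  -- the kernel-sum inequality
  have e4 := fact_ineq ν hmul hadd hq2 hqF hf hg hℓ hfn hgn hℓn hkerInt hkerSum c₀
  have hfinal : c₀ + c₃ ≤ c₁ + c₂ := by
    rw [e1, e2, e3]
    linarith [e4]
  rw [hlam0, hlam1, hlam2, hlam3]
  exact_mod_cast hfinal
end

section
/- Let L be a field containing 𝔽q, equipped with a non-archimedean additive valuation ν : L → ℝ ∪ {∞}. For a finite-dimensional 𝔽q-subspace V ⊆ L and z ∈ ℝ, set N_V(z) = #{β ∈ V : ν(β) ≥ z} (a finite number, and a power of q). Then for any two finite-dimensional 𝔽q-subspaces U, W ⊆ L and every z ∈ ℝ, one has both N_{U∩W}(z) · N_{U+W}(z) ≥ N_U(z) · N_W(z) and N_{U∩W}(z) + N_{U+W}(z) ≥ N_U(z) + N_W(z). -/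
/-- `N_V(z)` counts the elements `β` of the subspace `V` with `ν(β) ≥ z`
(where `ν(0) = ∞`, so `0` always counts). -/
noncomputable def Ncount {Fq L : Type*} [Field Fq] [Field L] [Algebra Fq L]
    (ν : L → ℝ) (V : Submodule Fq L) (z : ℝ) : ℕ :=
  Nat.card {β : L // β ∈ V ∧ (β = 0 ∨ z ≤ ν β)}

section Aux

variable {Fq L : Type*} [Field Fq] [Fintype Fq] [Field L] [Algebra Fq L]

lemma aux_nu_one (ν : L → ℝ)
    (hmul : ∀ x y : L, x ≠ 0 → y ≠ 0 → ν (x * y) = ν x + ν y) : ν 1 = 0 := by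
  have := hmul 1 1 one_ne_zero one_ne_zero
  rw [one_mul] at this; linarith

lemma aux_nu_pow (ν : L → ℝ)
    (hmul : ∀ x y : L, x ≠ 0 → y ≠ 0 → ν (x * y) = ν x + ν y)
    (x : L) (hx : x ≠ 0) : ∀ n : ℕ, ν (x ^ (n + 1)) = (n + 1) * ν x := by
  intro n
  induction n with
  | zero => simp
  | succ n ih =>
      have : x ^ (n + 1 + 1) = x ^ (n + 1) * x := by ring
      rw [this, hmul _ _ (pow_ne_zero _ hx) hx, ih]
      push_cast; ring

lemma aux_nu_algebraMap (ν : L → ℝ)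
    (hmul : ∀ x y : L, x ≠ 0 → y ≠ 0 → ν (x * y) = ν x + ν y)
    (c : Fq) (hc : c ≠ 0) : ν (algebraMap Fq L c) = 0 := by
  have hq : 1 ≤ Fintype.card Fq - 1 := by
    have := Fintype.one_lt_card (α := Fq); omega
  have hpow : c ^ (Fintype.card Fq - 1) = 1 := FiniteField.pow_card_sub_one_eq_one c hc
  have hx : (algebraMap Fq L c) ≠ 0 := by
    simpa using (map_ne_zero (algebraMap Fq L)).mpr hc
  obtain ⟨m, hm⟩ : ∃ m, Fintype.card Fq - 1 = m + 1 := ⟨Fintype.card Fq - 2, by omega⟩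
  have h1 : (algebraMap Fq L c) ^ (m + 1) = 1 := by
    rw [← map_pow, ← hm, hpow, map_one]
  have := aux_nu_pow ν hmul _ hx m
  rw [h1, aux_nu_one ν hmul] at this
  have hm1 : (0:ℝ) < (m:ℝ) + 1 := by positivity
  nlinarith

/-- The set of elements of valuation ≥ z (together with 0) is a subspace. -/
noncomputable def Tsub (ν : L → ℝ)
    (hmul : ∀ x y : L, x ≠ 0 → y ≠ 0 → ν (x * y) = ν x + ν y)
    (hadd : ∀ x y : L, x ≠ 0 → y ≠ 0 → x + y ≠ 0 → min (ν x) (ν y) ≤ ν (x + y))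
    (z : ℝ) : Submodule Fq L where
  carrier := {β | β = 0 ∨ z ≤ ν β}
  zero_mem' := Or.inl rfl
  add_mem' := by
    intro a b ha hb
    by_cases ha0 : a = 0
    · simpa [ha0] using hb
    by_cases hb0 : b = 0
    · simpa [hb0] using ha
    by_cases hab : a + b = 0
    · exact Or.inl hab
    rcases ha with rfl | ha
    · exact absurd rfl ha0
    rcases hb with rfl | hb
    · exact absurd rfl hb0
    exact Or.inr (le_trans (le_min ha hb) (hadd a b ha0 hb0 hab))
  smul_mem' := by
    rintro c x (rfl | hx)
    · simp
    · by_cases hc : c = 0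
      · simp [hc]
      · by_cases hx0 : x = 0
        · simp [hx0]
        · right
          have : (c • x) = (algebraMap Fq L c) * x := Algebra.smul_def c x
          rw [this, hmul _ _ (by simpa using (map_ne_zero (algebraMap Fq L)).mpr hc) hx0,
            aux_nu_algebraMap ν hmul c hc, zero_add]
          exact hx

end Aux

theorem stmt3 {Fq L : Type*} [Field Fq] [Fintype Fq] [Field L] [Algebra Fq L]
    (ν : L → ℝ)
    (hmul : ∀ x y : L, x ≠ 0 → y ≠ 0 → ν (x * y) = ν x + ν y)
    (hadd : ∀ x y : L, x ≠ 0 → y ≠ 0 → x + y ≠ 0 → min (ν x) (ν y) ≤ ν (x + y))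
    (U W : Submodule Fq L)
    (hU : FiniteDimensional Fq U) (hW : FiniteDimensional Fq W)
    (z : ℝ) :
    Ncount ν U z * Ncount ν W z ≤ Ncount ν (U ⊓ W) z * Ncount ν (U ⊔ W) z ∧
      Ncount ν U z + Ncount ν W z ≤ Ncount ν (U ⊓ W) z + Ncount ν (U ⊔ W) z := by
  classical
  set T : Submodule Fq L := Tsub ν hmul hadd z with hT
  have hTmem : ∀ β : L, β ∈ T ↔ (β = 0 ∨ z ≤ ν β) := fun β => Iff.rfl
  have key : ∀ V : Submodule Fq L, Ncount ν V z = Nat.card ↥(V ⊓ T) := by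
    intro V
    apply Nat.card_congr
    exact Equiv.subtypeEquivRight (fun β => by
      simp [Submodule.mem_inf, hTmem])
  have hUT : FiniteDimensional Fq ↥(U ⊓ T) := Submodule.finiteDimensional_inf_left U T
  have hWT : FiniteDimensional Fq ↥(W ⊓ T) := Submodule.finiteDimensional_inf_left W T
  have hUW : FiniteDimensional Fq ↥(U ⊔ W) := Submodule.finiteDimensional_sup U W
  have hUWT : FiniteDimensional Fq ↥((U ⊔ W) ⊓ T) :=
    Submodule.finiteDimensional_inf_left (U ⊔ W) T
  -- abbreviations
  set A := U ⊓ T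
  set B := W ⊓ T
  have hAB_inf : A ⊓ B = (U ⊓ W) ⊓ T := by
    simp only [A, B]
    rw [inf_inf_inf_comm, inf_idem]
  have hAB_sup_le : A ⊔ B ≤ (U ⊔ W) ⊓ T := by
    apply sup_le
    · exact inf_le_inf_right T le_sup_left
    · exact inf_le_inf_right T le_sup_right
  have hABsup : FiniteDimensional Fq ↥(A ⊔ B) := Submodule.finiteDimensional_sup A B
  have hABinf : FiniteDimensional Fq ↥(A ⊓ B) := Submodule.finiteDimensional_inf_left A B
  -- cardinalities via finrank
  have cardpow : ∀ (V : Submodule Fq L) (_ : FiniteDimensional Fq V),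
      Nat.card ↥V = Fintype.card Fq ^ Module.finrank Fq ↥V := by
    intro V hV
    have : Finite ↥V := Module.finite_of_finite Fq
    have : Fintype ↥V := Fintype.ofFinite _
    rw [Nat.card_eq_fintype_card, Module.card_eq_pow_finrank (K := Fq)]
  set q := Fintype.card Fq with hq
  have hq1 : 1 < q := Fintype.one_lt_card
  set α := Module.finrank Fq ↥A
  set β := Module.finrank Fq ↥B
  set δ := Module.finrank Fq ↥(A ⊓ B)
  set σ := Module.finrank Fq ↥(A ⊔ B)
  have hrank : σ + δ = α + β := Submodule.finrank_sup_add_finrank_inf_eq A B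
  have hδα : δ ≤ α := Submodule.finrank_mono (inf_le_left : A ⊓ B ≤ A)
  have hδβ : δ ≤ β := Submodule.finrank_mono (inf_le_right : A ⊓ B ≤ B)
  have hασ : α ≤ σ := Submodule.finrank_mono (le_sup_left : A ≤ A ⊔ B)
  -- card of sup ≤ card of target
  have hσle : Module.finrank Fq ↥(A ⊔ B) ≤ Module.finrank Fq ↥((U ⊔ W) ⊓ T) :=
    Submodule.finrank_mono hAB_sup_le
  have hcardsup : Nat.card ↥(A ⊔ B) ≤ Nat.card ↥((U ⊔ W) ⊓ T) := by
    rw [cardpow _ hABsup, cardpow _ hUWT]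
    exact Nat.pow_le_pow_right (by omega) hσle
  have hcardinf : Nat.card ↥(A ⊓ B) = Nat.card ↥((U ⊓ W) ⊓ T) := by rw [hAB_inf]
  -- the two inequalities at the level of q-powers
  have hmul' : q ^ α * q ^ β = q ^ δ * q ^ σ := by
    rw [← pow_add, ← pow_add]
    congr 1; omega
  have hadd' : q ^ α + q ^ β ≤ q ^ δ + q ^ σ := by
    obtain ⟨a, ha⟩ : ∃ a, α = δ + a := ⟨α - δ, by omega⟩
    obtain ⟨b, hb⟩ : ∃ b, β = δ + b := ⟨β - δ, by omega⟩
    have hσ : σ = δ + (a + b) := by omega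
    rw [ha, hb, hσ]
    simp only [pow_add]
    have h1 : 1 ≤ q ^ a := Nat.one_le_pow _ _ (by omega)
    have h2 : 1 ≤ q ^ b := Nat.one_le_pow _ _ (by omega)
    have h3 : q ^ a + q ^ b ≤ 1 + q ^ a * q ^ b := by
      obtain ⟨x, hx⟩ : ∃ x, q ^ a = 1 + x := ⟨q ^ a - 1, by omega⟩
      obtain ⟨y, hy⟩ : ∃ y, q ^ b = 1 + y := ⟨q ^ b - 1, by omega⟩
      rw [hx, hy]
      have : (1 + x) * (1 + y) = 1 + x + y + x * y := by ring
      rw [this]; omega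
    calc q ^ δ * q ^ a + q ^ δ * q ^ b = q ^ δ * (q ^ a + q ^ b) := by ring
      _ ≤ q ^ δ * (1 + q ^ a * q ^ b) := Nat.mul_le_mul_left _ h3
      _ = q ^ δ + q ^ δ * (q ^ a * q ^ b) := by ring
  constructor
  · rw [key U, key W, key (U ⊓ W), key (U ⊔ W)]
    calc Nat.card ↥A * Nat.card ↥B = q ^ α * q ^ β := by
          rw [cardpow _ hUT, cardpow _ hWT]
      _ = q ^ δ * q ^ σ := hmul'
      _ = Nat.card ↥(A ⊓ B) * Nat.card ↥(A ⊔ B) := by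
          rw [cardpow _ hABinf, cardpow _ hABsup]
      _ ≤ Nat.card ↥((U ⊓ W) ⊓ T) * Nat.card ↥((U ⊔ W) ⊓ T) := by
          rw [← hcardinf]; exact Nat.mul_le_mul_left _ hcardsup
  · rw [key U, key W, key (U ⊓ W), key (U ⊔ W)]
    calc Nat.card ↥A + Nat.card ↥B = q ^ α + q ^ β := by
          rw [cardpow _ hUT, cardpow _ hWT]
      _ ≤ q ^ δ + q ^ σ := hadd'
      _ = Nat.card ↥(A ⊓ B) + Nat.card ↥(A ⊔ B) := by
          rw [cardpow _ hABinf, cardpow _ hABsup]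
      _ ≤ Nat.card ↥((U ⊓ W) ⊓ T) + Nat.card ↥((U ⊔ W) ⊓ T) := by
          rw [← hcardinf]; exact Nat.add_le_add_left hcardsup _
end

section
/- Let f, g ∈ F[X] be nonzero q-linearized polynomials. Then the composition f ∘ g is a nonzero q-linearized polynomial and for every z ∈ ℝ one has V_{f∘g}(z) = V_f(V_g(z)). -/
open Polynomial

/-- The valuation polygon `V_f(z) = min { ν(fᵢ) + qⁱ z : fᵢ ≠ 0 }` of a nonzero
`q`-linearized polynomial. -/
noncomputable def Vpoly {F : Type*} [Field F] (q : ℕ) (ν : F → ℚ) (f : Polynomial F)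
    (z : ℝ) : ℝ :=
  sInf {y : ℝ | ∃ i : ℕ, f.coeff (q ^ i) ≠ 0 ∧
    y = (ν (f.coeff (q ^ i)) : ℝ) + (q : ℝ) ^ i * z}

section Aux

variable {F : Type*} [Field F] {ν : F → ℚ}

lemma nu_one (hmul : ∀ x y : F, x ≠ 0 → y ≠ 0 → ν (x * y) = ν x + ν y) : ν 1 = 0 := by
  have := hmul 1 1 one_ne_zero one_ne_zero
  simp only [mul_one] at this
  linarith

lemma nu_neg (hmul : ∀ x y : F, x ≠ 0 → y ≠ 0 → ν (x * y) = ν x + ν y)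
    (x : F) (hx : x ≠ 0) : ν (-x) = ν x := by
  have h1 : ν ((-1 : F) * (-1)) = ν (-1 : F) + ν (-1 : F) :=
    hmul _ _ (by norm_num) (by norm_num)
  rw [neg_mul_neg, one_mul, nu_one hmul] at h1
  have h2 : ν ((-1 : F) * x) = ν (-1 : F) + ν x := hmul _ _ (by norm_num) hx
  rw [neg_one_mul] at h2
  linarith

lemma nu_pow (hmul : ∀ x y : F, x ≠ 0 → y ≠ 0 → ν (x * y) = ν x + ν y)
    (x : F) (hx : x ≠ 0) (m : ℕ) : ν (x ^ m) = m * ν x := by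
  induction m with
  | zero => simpa using nu_one hmul
  | succ n ih =>
    rw [pow_succ, hmul _ _ (pow_ne_zero _ hx) hx, ih]
    push_cast; ring

lemma nu_sum_ge (hadd : ∀ x y : F, x ≠ 0 → y ≠ 0 → x + y ≠ 0 → min (ν x) (ν y) ≤ ν (x + y))
    {ι : Type*} (T : Finset ι) (x : ι → F)
    (hx : ∀ s ∈ T, x s ≠ 0) (hs : ∑ s ∈ T, x s ≠ 0) :
    ∃ s ∈ T, ν (x s) ≤ ν (∑ s ∈ T, x s) := by
  classical
  induction T using Finset.cons_induction with
  | empty => simp at hs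
  | cons a T ha ih =>
    rw [Finset.sum_cons] at hs ⊢
    by_cases hS : ∑ s ∈ T, x s = 0
    · exact ⟨a, Finset.mem_cons_self a T, by rw [hS, add_zero]⟩
    · obtain ⟨s, hsT, hle⟩ := ih (fun s hs => hx s (Finset.mem_cons_of_mem hs)) hS
      have hm := hadd (x a) (∑ s ∈ T, x s) (hx a (Finset.mem_cons_self a T)) hS hs
      rcases min_le_iff.mp (le_refl (min (ν (x a)) (ν (∑ s ∈ T, x s)))) with h | h
      · rcases le_total (ν (x a)) (ν (∑ s ∈ T, x s)) with hc | hc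
        · exact ⟨a, Finset.mem_cons_self a T, le_trans (by rw [min_eq_left hc] at hm; exact hm) (le_refl _)⟩
        · refine ⟨s, Finset.mem_cons_of_mem hsT, ?_⟩
          rw [min_eq_right hc] at hm
          exact le_trans hle hm
      · rcases le_total (ν (x a)) (ν (∑ s ∈ T, x s)) with hc | hc
        · exact ⟨a, Finset.mem_cons_self a T, by rw [min_eq_left hc] at hm; exact hm⟩
        · refine ⟨s, Finset.mem_cons_of_mem hsT, ?_⟩
          rw [min_eq_right hc] at hm
          exact le_trans hle hm

lemma nu_sum_strict (hmul : ∀ x y : F, x ≠ 0 → y ≠ 0 → ν (x * y) = ν x + ν y)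
    (hadd : ∀ x y : F, x ≠ 0 → y ≠ 0 → x + y ≠ 0 → min (ν x) (ν y) ≤ ν (x + y))
    {ι : Type*} [DecidableEq ι] (T : Finset ι) (x : ι → F) (a : ι) (haT : a ∈ T)
    (hx : ∀ s ∈ T, x s ≠ 0) (hstrict : ∀ s ∈ T, s ≠ a → ν (x a) < ν (x s)) :
    (∑ s ∈ T, x s) ≠ 0 ∧ ν (∑ s ∈ T, x s) = ν (x a) := by
  have hrw : ∑ s ∈ T, x s = x a + ∑ s ∈ T.erase a, x s := (Finset.add_sum_erase T x haT).symm
  set S := ∑ s ∈ T.erase a, x s with hSdef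
  by_cases hS0 : S = 0
  · rw [hrw, hS0, add_zero]; exact ⟨hx a haT, rfl⟩
  · have hlt : ν (x a) < ν S := by
      obtain ⟨s, hsT, hle⟩ := nu_sum_ge hadd (T.erase a) x
        (fun s hs => hx s (Finset.mem_of_mem_erase hs)) hS0
      exact lt_of_lt_of_le
        (hstrict s (Finset.mem_of_mem_erase hsT) (Finset.ne_of_mem_erase hsT)) hle
    have hne0 : x a + S ≠ 0 := by
      intro h
      have hxa : x a = -S := eq_neg_of_add_eq_zero_left h
      rw [hxa, nu_neg hmul S hS0] at hlt
      exact lt_irrefl _ hlt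
    have h1 : ν (x a) ≤ ν (x a + S) := by
      have := hadd (x a) S (hx a haT) hS0 hne0
      rwa [min_eq_left hlt.le] at this
    have h2 : ν (x a + S) ≤ ν (x a) := by
      have hxa' : (x a + S) + (-S) = x a := by ring
      have hm := hadd (x a + S) (-S) hne0 (neg_ne_zero.mpr hS0)
        (by rw [hxa']; exact hx a haT)
      rw [hxa', nu_neg hmul S hS0] at hm
      rcases min_cases (ν (x a + S)) (ν S) with ⟨heq, _⟩ | ⟨heq, hlt2⟩
      · rw [heq] at hm; exact hm
      · rw [heq] at hm; linarith
    rw [hrw]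
    exact ⟨hne0, le_antisymm h2 h1⟩

open scoped Classical in
/-- The finite set of indices `i` with `f.coeff (q^i) ≠ 0`. -/
noncomputable def idxSet {F : Type*} [Field F] (q : ℕ) (f : Polynomial F) : Finset ℕ :=
  (Finset.range (f.natDegree + 1)).filter (fun i => f.coeff (q ^ i) ≠ 0)

open scoped Classical in
lemma mem_idxSet {F : Type*} [Field F] {q : ℕ} (hq2 : 2 ≤ q) {f : Polynomial F} {i : ℕ} :
    i ∈ idxSet q f ↔ f.coeff (q ^ i) ≠ 0 := by
  constructor
  · intro h; exact (Finset.mem_filter.mp h).2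
  · intro h
    refine Finset.mem_filter.mpr ⟨Finset.mem_range.mpr ?_, h⟩
    have h1 : i < 2 ^ i := Nat.lt_two_pow_self
    have h2 : 2 ^ i ≤ q ^ i := Nat.pow_le_pow_left hq2 i
    have h3 : q ^ i ≤ f.natDegree := le_natDegree_of_ne_zero h
    omega

lemma idxSet_nonempty {F : Type*} [Field F] {q : ℕ} (hq2 : 2 ≤ q) {f : Polynomial F}
    (hf : IsqLin q f) (hf0 : f ≠ 0) : (idxSet q f).Nonempty := by
  obtain ⟨n, hn⟩ := Polynomial.support_nonempty.mpr hf0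
  have hn0 : f.coeff n ≠ 0 := Polynomial.mem_support_iff.mp hn
  obtain ⟨i, rfl⟩ := hf n hn0
  exact ⟨i, (mem_idxSet hq2).mpr hn0⟩

lemma Vpoly_eq_inf' {F : Type*} [Field F] {q : ℕ} (hq2 : 2 ≤ q) (ν : F → ℚ)
    {f : Polynomial F} (h : (idxSet q f).Nonempty) (z : ℝ) :
    Vpoly q ν f z =
      (idxSet q f).inf' h (fun i => (ν (f.coeff (q ^ i)) : ℝ) + (q : ℝ) ^ i * z) := by
  rw [Finset.inf'_eq_csInf_image]
  unfold Vpoly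
  congr 1
  ext y
  simp only [Set.mem_setOf_eq, Set.mem_image, Finset.mem_coe]
  constructor
  · rintro ⟨i, hi, rfl⟩
    exact ⟨i, (mem_idxSet hq2).mpr hi, rfl⟩
  · rintro ⟨i, hi, rfl⟩
    exact ⟨i, (mem_idxSet hq2).mp hi, rfl⟩

lemma affine_subsingleton (α α' β β' : ℝ) (h : β ≠ β') :
    {z : ℝ | α + β * z = α' + β' * z}.Subsingleton := by
  intro z1 h1 z2 h2
  simp only [Set.mem_setOf_eq] at h1 h2
  have hβ : β - β' ≠ 0 := sub_ne_zero.mpr h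
  have : (β - β') * z1 = (β - β') * z2 := by linarith
  exact mul_left_cancel₀ hβ this

lemma qpow_injR {q : ℕ} (hq2 : 2 ≤ q) : Function.Injective (fun i : ℕ => (q : ℝ) ^ i) := by
  apply pow_right_injective₀ (by positivity)
  intro h
  have : q = 1 := by exact_mod_cast h
  omega

end Aux

set_option maxHeartbeats 1000000 in
theorem stmt4 {Fq F : Type*} [Field Fq] [Fintype Fq] [Field F] [Algebra Fq F]
    (q : ℕ) (hq : q = Fintype.card Fq)
    (ν : F → ℚ)
    (hmul : ∀ x y : F, x ≠ 0 → y ≠ 0 → ν (x * y) = ν x + ν y)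
    (hadd : ∀ x y : F, x ≠ 0 → y ≠ 0 → x + y ≠ 0 → min (ν x) (ν y) ≤ ν (x + y))
    (f g : Polynomial F) (hf : IsqLin q f) (hg : IsqLin q g)
    (hf0 : f ≠ 0) (hg0 : g ≠ 0) :
    IsqLin q (f.comp g) ∧ f.comp g ≠ 0 ∧
      ∀ z : ℝ, Vpoly q ν (f.comp g) z = Vpoly q ν f (Vpoly q ν g z) := by
  classical
  -- characteristic setup
  set p := ringChar Fq with hp
  obtain ⟨e, hpprime, hcard⟩ := FiniteField.card Fq p
  have hqpe : q = p ^ (e : ℕ) := by rw [hq, hcard]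
  haveI : CharP F p := charP_of_injective_algebraMap (algebraMap Fq F).injective p
  haveI : CharP F[X] p := inferInstance
  haveI : ExpChar F[X] p := ExpChar.prime hpprime
  have hq2 : 2 ≤ q := by
    rw [hq]; exact Fintype.one_lt_card
  have hqR : (1:ℝ) < (q:ℝ) := by exact_mod_cast hq2.trans_lt' one_lt_two
  have hqpow : ∀ i j : ℕ, q ^ i = q ^ j → i = j :=
    fun i j h => Nat.pow_right_injective hq2 h
  set a : ℕ → F := fun j => f.coeff (q ^ j) with ha
  set b : ℕ → F := fun i => g.coeff (q ^ i) with hb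
  set A := idxSet q f with hA
  set B := idxSet q g with hB
  have hAmem : ∀ {j}, j ∈ A ↔ a j ≠ 0 := fun {j} => mem_idxSet hq2
  have hBmem : ∀ {i}, i ∈ B ↔ b i ≠ 0 := fun {i} => mem_idxSet hq2
  have hAne : A.Nonempty := idxSet_nonempty hq2 hf hf0
  have hBne : B.Nonempty := idxSet_nonempty hq2 hg hg0
  -- decomposition as sums of monomials
  have hsum : ∀ (h : Polynomial F), IsqLin q h →
      h = ∑ j ∈ idxSet q h, monomial (q ^ j) (h.coeff (q ^ j)) := by
    intro h hh
    ext n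
    rw [finset_sum_coeff]
    simp only [coeff_monomial]
    by_cases hn : ∃ i, n = q ^ i
    · obtain ⟨i, rfl⟩ := hn
      by_cases hi : i ∈ idxSet q h
      · rw [Finset.sum_eq_single_of_mem i hi]
        · simp
        · intro j hj hji
          rw [if_neg (fun hc => hji (hqpow j i hc))]
      · have hc0 : h.coeff (q ^ i) = 0 := by
          by_contra hc
          exact hi ((mem_idxSet hq2).mpr hc)
        rw [hc0, Finset.sum_eq_zero]
        intro j hj
        rw [if_neg (fun hc => hi (by rwa [hqpow j i hc] at hj))]
    · have hc0 : h.coeff n = 0 := by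
        by_contra hc
        exact hn (hh n hc)
      rw [hc0, Finset.sum_eq_zero]
      intro j hj
      rw [if_neg (fun hc => hn ⟨j, hc.symm⟩)]
  have hfsum : f = ∑ j ∈ A, monomial (q ^ j) (a j) := hsum f hf
  have hgsum : g = ∑ i ∈ B, monomial (q ^ i) (b i) := hsum g hg
  -- Frobenius powers of g
  have hgpow : ∀ j : ℕ, g ^ q ^ j = ∑ i ∈ B, monomial (q ^ (i + j)) (b i ^ q ^ j) := by
    intro j
    have h1 : g ^ q ^ j = iterateFrobenius F[X] p (e * j) g := by
      rw [iterateFrobenius_def, pow_mul, ← hqpe]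
    rw [h1]
    conv_lhs => rw [hgsum]
    rw [map_sum]
    refine Finset.sum_congr rfl fun i hi => ?_
    rw [iterateFrobenius_def, monomial_pow, pow_mul, ← hqpe, ← pow_add]
  -- composition formula
  have hcomp : f.comp g = ∑ j ∈ A, ∑ i ∈ B, monomial (q ^ (i + j)) (a j * b i ^ q ^ j) := by
    conv_lhs => rw [hfsum]
    show eval₂ C g _ = _
    rw [eval₂_finset_sum]
    refine Finset.sum_congr rfl fun j hj => ?_
    rw [eval₂_monomial, hgpow j, Finset.mul_sum]
    refine Finset.sum_congr rfl fun i hi => ?_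
    rw [C_mul_monomial]
  have hcoeff : ∀ n, (f.comp g).coeff n =
      ∑ j ∈ A, ∑ i ∈ B, if q ^ (i + j) = n then a j * b i ^ q ^ j else 0 := by
    intro n
    rw [hcomp, finset_sum_coeff]
    refine Finset.sum_congr rfl fun j hj => ?_
    rw [finset_sum_coeff]
    refine Finset.sum_congr rfl fun i hi => ?_
    rw [coeff_monomial]
  -- IsqLin of the composition
  have hqlin : IsqLin q (f.comp g) := by
    intro n hn
    by_contra hc
    push_neg at hc
    rw [hcoeff n] at hn
    apply hn
    refine Finset.sum_eq_zero fun j hj => Finset.sum_eq_zero fun i hi => ?_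
    rw [if_neg (fun h => hc (i + j) h.symm)]
  -- coefficient at q^k as a sum over pairs
  set P : ℕ → Finset (ℕ × ℕ) := fun k => (A ×ˢ B).filter (fun s => s.2 + s.1 = k) with hP
  set t : ℕ × ℕ → F := fun s => a s.1 * b s.2 ^ q ^ s.1 with ht
  have hck : ∀ k, (f.comp g).coeff (q ^ k) = ∑ s ∈ P k, t s := by
    intro k
    rw [hcoeff, hP]
    rw [Finset.sum_filter, Finset.sum_product]
    refine Finset.sum_congr rfl fun j hj => Finset.sum_congr rfl fun i hi => ?_
    congr 1
    simp only [eq_iff_iff]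
    exact Iff.intro (fun h => hqpow _ _ h) (fun h => by rw [h])
  have htne : ∀ k, ∀ s ∈ P k, t s ≠ 0 := by
    intro k s hs
    obtain ⟨hsAB, _⟩ := Finset.mem_filter.mp hs
    obtain ⟨h1, h2⟩ := Finset.mem_product.mp hsAB
    exact mul_ne_zero (hAmem.mp h1) (pow_ne_zero _ (hBmem.mp h2))
  have hnut : ∀ k, ∀ s ∈ P k, ν (t s) = ν (a s.1) + (q ^ s.1 : ℕ) * ν (b s.2) := by
    intro k s hs
    obtain ⟨hsAB, _⟩ := Finset.mem_filter.mp hs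
    obtain ⟨h1, h2⟩ := Finset.mem_product.mp hsAB
    rw [ht]
    rw [hmul _ _ (hAmem.mp h1) (pow_ne_zero _ (hBmem.mp h2)),
      nu_pow hmul _ (hBmem.mp h2)]
  -- nonzeroness via the top coefficient
  set jm := A.max' hAne with hjm
  set im := B.max' hBne with him
  have hPtop : P (im + jm) = {(jm, im)} := by
    ext s
    simp only [hP, Finset.mem_filter, Finset.mem_product, Finset.mem_singleton]
    constructor
    · rintro ⟨⟨h1, h2⟩, h3⟩
      have hj : s.1 ≤ jm := Finset.le_max' A s.1 h1
      have hi : s.2 ≤ im := Finset.le_max' B s.2 h2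
      have : s.1 = jm ∧ s.2 = im := by omega
      exact Prod.ext this.1 this.2
    · rintro rfl
      exact ⟨⟨A.max'_mem hAne, B.max'_mem hBne⟩, rfl⟩
  have hctop : (f.comp g).coeff (q ^ (im + jm)) ≠ 0 := by
    rw [hck, hPtop, Finset.sum_singleton]
    exact mul_ne_zero (hAmem.mp (A.max'_mem hAne)) (pow_ne_zero _ (hBmem.mp (B.max'_mem hBne)))
  have hfg0 : f.comp g ≠ 0 := fun h => hctop (by rw [h, Polynomial.coeff_zero])
  refine ⟨hqlin, hfg0, ?_⟩
  -- the polygon identity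
  set Cs := idxSet q (f.comp g) with hCs
  have hCne : Cs.Nonempty := idxSet_nonempty hq2 hqlin hfg0
  set c : ℕ → F := fun k => (f.comp g).coeff (q ^ k) with hc
  have hCmem : ∀ {k}, k ∈ Cs ↔ c k ≠ 0 := fun {k} => mem_idxSet hq2
  -- real-valued term functions
  set VG : ℝ → ℝ := fun z => B.inf' hBne (fun i => (ν (b i) : ℝ) + (q:ℝ) ^ i * z) with hVG
  set VF : ℝ → ℝ := fun w => A.inf' hAne (fun j => (ν (a j) : ℝ) + (q:ℝ) ^ j * w) with hVF
  set VC : ℝ → ℝ := fun z => Cs.inf' hCne (fun k => (ν (c k) : ℝ) + (q:ℝ) ^ k * z) with hVC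
  have hVGeq : ∀ z, Vpoly q ν g z = VG z := fun z => Vpoly_eq_inf' hq2 ν hBne z
  have hVFeq : ∀ w, Vpoly q ν f w = VF w := fun w => Vpoly_eq_inf' hq2 ν hAne w
  have hVCeq : ∀ z, Vpoly q ν (f.comp g) z = VC z := fun z => Vpoly_eq_inf' hq2 ν hCne z
  suffices hmain : VC = fun z => VF (VG z) by
    intro z
    rw [hVCeq z, hVGeq z, hVFeq (VG z), hmain]
  -- lower bound : VF (VG z) ≤ VC z for all z
  have hlow : ∀ z, VF (VG z) ≤ VC z := by
    intro z
    rw [hVC]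
    refine Finset.le_inf' hCne _ fun k hk => ?_
    have hck0 : c k ≠ 0 := hCmem.mp hk
    have hcksum : c k = ∑ s ∈ P k, t s := hck k
    have hsne : ∑ s ∈ P k, t s ≠ 0 := by rw [← hcksum]; exact hck0
    obtain ⟨s, hsP, hle⟩ := nu_sum_ge hadd (P k) t (htne k) hsne
    obtain ⟨hsAB, hsk⟩ := Finset.mem_filter.mp hsP
    obtain ⟨h1, h2⟩ := Finset.mem_product.mp hsAB
    have hnu : ν (t s) = ν (a s.1) + (q ^ s.1 : ℕ) * ν (b s.2) := hnut k s hsP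
    have key : (ν (a s.1) : ℝ) + (q:ℝ) ^ s.1 * ((ν (b s.2) : ℝ) + (q:ℝ) ^ s.2 * z)
        ≤ (ν (c k) : ℝ) + (q:ℝ) ^ k * z := by
      have h3 : (ν (t s) : ℝ) ≤ (ν (c k) : ℝ) := by
        rw [hcksum]; exact_mod_cast hle
      have h4 : (ν (t s) : ℝ) = (ν (a s.1) : ℝ) + (q:ℝ) ^ s.1 * (ν (b s.2) : ℝ) := by
        rw [hnu]; push_cast; ring
      have h5 : (q:ℝ) ^ k = (q:ℝ) ^ s.1 * (q:ℝ) ^ s.2 := by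
        rw [← pow_add, add_comm s.1 s.2, hsk]
      have h6 : (ν (a s.1) : ℝ) + (q:ℝ) ^ s.1 * ((ν (b s.2) : ℝ) + (q:ℝ) ^ s.2 * z)
          = (ν (t s) : ℝ) + (q:ℝ) ^ k * z := by rw [h4, h5]; ring
      linarith [h3, h6]
    have hVGle : VG z ≤ (ν (b s.2) : ℝ) + (q:ℝ) ^ s.2 * z := Finset.inf'_le _ h2
    have hVFle : VF (VG z) ≤ (ν (a s.1) : ℝ) + (q:ℝ) ^ s.1 * VG z := Finset.inf'_le _ h1
    have hqpos : (0:ℝ) < (q:ℝ) ^ s.1 := by positivity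
    nlinarith [hVFle, hVGle, key, hqpos, mul_le_mul_of_nonneg_left hVGle hqpos.le]
  -- the bad set
  set E1 : ℕ × ℕ → Set ℝ := fun s =>
    if s.1 = s.2 then ∅ else
      {z | (ν (b s.1) : ℝ) + (q:ℝ) ^ s.1 * z = (ν (b s.2) : ℝ) + (q:ℝ) ^ s.2 * z} with hE1
  set E2 : ℕ × ℕ × ℕ → Set ℝ := fun s =>
    if s.2.1 = s.2.2 then ∅ else
      {z | (ν (a s.2.1) : ℝ) + (q:ℝ) ^ s.2.1 * ((ν (b s.1) : ℝ) + (q:ℝ) ^ s.1 * z)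
        = (ν (a s.2.2) : ℝ) + (q:ℝ) ^ s.2.2 * ((ν (b s.1) : ℝ) + (q:ℝ) ^ s.1 * z)} with hE2
  set Bad : Set ℝ := (⋃ s ∈ (B ×ˢ B : Finset (ℕ × ℕ)), E1 s) ∪
    ⋃ s ∈ (B ×ˢ (A ×ˢ A) : Finset (ℕ × ℕ × ℕ)), E2 s with hBad
  have hE1fin : ∀ s, (E1 s).Finite := by
    intro s
    simp only [hE1]
    by_cases h : s.1 = s.2
    · simp [h]
    · rw [if_neg h]
      apply Set.Subsingleton.finite
      exact affine_subsingleton _ _ _ _ (fun hc => h (qpow_injR hq2 hc))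
  have hE2fin : ∀ s, (E2 s).Finite := by
    intro s
    simp only [hE2]
    by_cases h : s.2.1 = s.2.2
    · simp [h]
    · rw [if_neg h]
      apply Set.Subsingleton.finite
      have e1 : ∀ (u v : ℝ) (m n : ℕ) (z : ℝ), u + (q:ℝ) ^ m * (v + (q:ℝ) ^ n * z)
          = (u + (q:ℝ) ^ m * v) + ((q:ℝ) ^ m * (q:ℝ) ^ n) * z := fun u v m n z => by ring
      have hsub : {z : ℝ | (ν (a s.2.1) : ℝ) + (q:ℝ) ^ s.2.1 * ((ν (b s.1) : ℝ) + (q:ℝ) ^ s.1 * z)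
          = (ν (a s.2.2) : ℝ) + (q:ℝ) ^ s.2.2 * ((ν (b s.1) : ℝ) + (q:ℝ) ^ s.1 * z)} =
          {z : ℝ | ((ν (a s.2.1) : ℝ) + (q:ℝ) ^ s.2.1 * (ν (b s.1) : ℝ))
            + ((q:ℝ) ^ s.2.1 * (q:ℝ) ^ s.1) * z
          = ((ν (a s.2.2) : ℝ) + (q:ℝ) ^ s.2.2 * (ν (b s.1) : ℝ))
            + ((q:ℝ) ^ s.2.2 * (q:ℝ) ^ s.1) * z} := by
        ext z; simp only [Set.mem_setOf_eq, e1]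
      rw [hsub]
      refine affine_subsingleton _ _ _ _ ?_
      intro hc
      have hq0 : (q:ℝ) ^ s.1 ≠ 0 := by positivity
      exact h (qpow_injR hq2 (mul_right_cancel₀ hq0 hc))
  have hBadfin : Bad.Finite := by
    rw [hBad]
    apply Set.Finite.union
    · exact Set.Finite.biUnion (Finset.finite_toSet _) (fun s _ => hE1fin s)
    · exact Set.Finite.biUnion (Finset.finite_toSet _) (fun s _ => hE2fin s)
  -- equality on the complement of Bad
  have hgood : ∀ z ∉ Bad, VC z = VF (VG z) := by
    intro z hz
    rw [hBad, Set.mem_union, not_or] at hz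
    obtain ⟨hz1, hz2⟩ := hz
    -- unique minimizer for g
    obtain ⟨i0, hi0B, hi0⟩ := Finset.exists_mem_eq_inf' hBne
      (fun i => (ν (b i) : ℝ) + (q:ℝ) ^ i * z)
    have hgstrict : ∀ i ∈ B, i ≠ i0 → VG z < (ν (b i) : ℝ) + (q:ℝ) ^ i * z := by
      intro i hiB hne
      have hle : VG z ≤ (ν (b i) : ℝ) + (q:ℝ) ^ i * z := Finset.inf'_le _ hiB
      rcases lt_or_eq_of_le hle with h | h
      · exact h
      · exfalso
        apply hz1
        refine Set.mem_iUnion₂.mpr ⟨(i0, i), Finset.mem_product.mpr ⟨hi0B, hiB⟩, ?_⟩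
        simp only [hE1]
        rw [if_neg (fun hc => hne hc.symm)]
        simp only [Set.mem_setOf_eq]
        rw [← hi0, ← h]
    set w := VG z with hw
    have hweq : w = (ν (b i0) : ℝ) + (q:ℝ) ^ i0 * z := hi0
    -- unique minimizer for f at w
    obtain ⟨j0, hj0A, hj0⟩ := Finset.exists_mem_eq_inf' hAne
      (fun j => (ν (a j) : ℝ) + (q:ℝ) ^ j * w)
    have hfstrict : ∀ j ∈ A, j ≠ j0 → VF w < (ν (a j) : ℝ) + (q:ℝ) ^ j * w := by
      intro j hjA hne
      have hle : VF w ≤ (ν (a j) : ℝ) + (q:ℝ) ^ j * w := Finset.inf'_le _ hjA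
      rcases lt_or_eq_of_le hle with h | h
      · exact h
      · exfalso
        apply hz2
        refine Set.mem_iUnion₂.mpr ⟨(i0, j0, j),
          Finset.mem_product.mpr ⟨hi0B, Finset.mem_product.mpr ⟨hj0A, hjA⟩⟩, ?_⟩
        simp only [hE2]
        rw [if_neg (fun hc => hne hc.symm)]
        simp only [Set.mem_setOf_eq]
        rw [← hweq, ← hj0, ← h]
    set k0 := i0 + j0 with hk0
    have hs0P : (j0, i0) ∈ P k0 := by
      rw [hP]
      exact Finset.mem_filter.mpr ⟨Finset.mem_product.mpr ⟨hj0A, hi0B⟩, rfl⟩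
    -- strict dominance of (j0, i0) within P k0
    have hdom : ∀ s ∈ P k0, s ≠ (j0, i0) → ν (t (j0, i0)) < ν (t s) := by
      intro s hsP hne
      obtain ⟨hsAB, hsk⟩ := Finset.mem_filter.mp hsP
      obtain ⟨h1, h2⟩ := Finset.mem_product.mp hsAB
      -- compare in ℝ :
      have hR : (ν (t (j0, i0)) : ℝ) + (q:ℝ) ^ k0 * z < (ν (t s) : ℝ) + (q:ℝ) ^ k0 * z := by
        have hts : (ν (t s) : ℝ) = (ν (a s.1) : ℝ) + (q:ℝ) ^ s.1 * (ν (b s.2) : ℝ) := by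
          rw [hnut k0 s hsP]; push_cast; ring
        have ht0 : (ν (t (j0, i0)) : ℝ) = (ν (a j0) : ℝ) + (q:ℝ) ^ j0 * (ν (b i0) : ℝ) := by
          rw [hnut k0 (j0, i0) hs0P]; push_cast; ring
        have hpk : (q:ℝ) ^ k0 = (q:ℝ) ^ s.1 * (q:ℝ) ^ s.2 := by
          rw [← pow_add, add_comm s.1 s.2, hsk]
        have hpk0 : (q:ℝ) ^ k0 = (q:ℝ) ^ j0 * (q:ℝ) ^ i0 := by
          rw [← pow_add, add_comm j0 i0, hk0]
        have hrhs0 : (ν (t (j0, i0)) : ℝ) + (q:ℝ) ^ k0 * z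
            = (ν (a j0) : ℝ) + (q:ℝ) ^ j0 * w := by
          rw [ht0, hpk0, hweq]; ring
        have hVFw : (ν (a j0) : ℝ) + (q:ℝ) ^ j0 * w = VF w := hj0.symm
        have hq1pos : (0:ℝ) < (q:ℝ) ^ s.1 := by positivity
        by_cases hjj : s.1 = j0
        · -- then s.2 ≠ i0
          have hii : s.2 ≠ i0 := by
            intro hc; exact hne (Prod.ext hjj hc)
          have hgt : w < (ν (b s.2) : ℝ) + (q:ℝ) ^ s.2 * z := hgstrict s.2 h2 hii
          have : (ν (a s.1) : ℝ) + (q:ℝ) ^ s.1 * w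
              < (ν (t s) : ℝ) + (q:ℝ) ^ k0 * z := by
            rw [hts, hpk]; nlinarith [hgt, hq1pos]
          calc (ν (t (j0, i0)) : ℝ) + (q:ℝ) ^ k0 * z
              = (ν (a j0) : ℝ) + (q:ℝ) ^ j0 * w := hrhs0
            _ = (ν (a s.1) : ℝ) + (q:ℝ) ^ s.1 * w := by rw [hjj]
            _ < (ν (t s) : ℝ) + (q:ℝ) ^ k0 * z := this
        · have hge : w ≤ (ν (b s.2) : ℝ) + (q:ℝ) ^ s.2 * z := Finset.inf'_le _ h2
          have hgt : VF w < (ν (a s.1) : ℝ) + (q:ℝ) ^ s.1 * w := hfstrict s.1 h1 hjj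
          have h6 : (ν (a s.1) : ℝ) + (q:ℝ) ^ s.1 * w
              ≤ (ν (t s) : ℝ) + (q:ℝ) ^ k0 * z := by
            rw [hts, hpk]; nlinarith [hge, hq1pos]
          calc (ν (t (j0, i0)) : ℝ) + (q:ℝ) ^ k0 * z
              = VF w := by rw [hrhs0, hVFw]
            _ < (ν (a s.1) : ℝ) + (q:ℝ) ^ s.1 * w := hgt
            _ ≤ (ν (t s) : ℝ) + (q:ℝ) ^ k0 * z := h6
      have := lt_of_add_lt_add_right hR
      exact_mod_cast this
    obtain ⟨hck0ne, hck0val⟩ := nu_sum_strict hmul hadd (P k0) t (j0, i0) hs0P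
      (htne k0) hdom
    have hck0 : c k0 ≠ 0 := by simp only [hc]; rw [hck k0]; exact hck0ne
    have hk0C : k0 ∈ Cs := hCmem.mpr hck0
    have hnuck0 : ν (c k0) = ν (t (j0, i0)) := by
      simp only [hc]; rw [hck k0]; exact hck0val
    -- upper bound
    have hup : VC z ≤ VF (VG z) := by
      have h1 : VC z ≤ (ν (c k0) : ℝ) + (q:ℝ) ^ k0 * z := Finset.inf'_le _ hk0C
      have ht0 : (ν (t (j0, i0)) : ℝ) = (ν (a j0) : ℝ) + (q:ℝ) ^ j0 * (ν (b i0) : ℝ) := by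
        rw [hnut k0 (j0, i0) hs0P]; push_cast; ring
      have hpk0 : (q:ℝ) ^ k0 = (q:ℝ) ^ j0 * (q:ℝ) ^ i0 := by
        rw [← pow_add, add_comm j0 i0, hk0]
      have h2 : (ν (c k0) : ℝ) + (q:ℝ) ^ k0 * z = (ν (a j0) : ℝ) + (q:ℝ) ^ j0 * w := by
        rw [hnuck0, ht0, hpk0, hweq]; ring
      calc VC z ≤ (ν (c k0) : ℝ) + (q:ℝ) ^ k0 * z := h1
        _ = (ν (a j0) : ℝ) + (q:ℝ) ^ j0 * w := h2
        _ = VF w := hj0.symm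
        _ = VF (VG z) := by rw [hw]
    exact le_antisymm hup (hlow z)
  -- continuity and density finish the proof
  have hVGcont : Continuous VG := by
    rw [hVG]
    apply Continuous.finset_inf'_apply hBne
    intro i _
    exact continuous_const.add (continuous_const.mul continuous_id)
  have hVCcont : Continuous VC := by
    rw [hVC]
    apply Continuous.finset_inf'_apply hCne
    intro k _
    exact continuous_const.add (continuous_const.mul continuous_id)
  have hVFVGcont : Continuous (fun z => VF (VG z)) := by
    rw [hVF]
    apply Continuous.finset_inf'_apply hAne
    intro j _
    exact continuous_const.add (continuous_const.mul hVGcont)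
  have hdense : Dense Badᶜ := Set.Countable.dense_compl ℝ hBadfin.countable
  exact Continuous.ext_on hdense hVCcont hVFVGcont (fun z hz => hgood z hz)
end
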